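/- arXiv:1803.03990 — 6 statements merged into one kernel-verified Lean document; each statement's English description precedes it below -/
import Mathlib

section
/- The assignment V ↦ V/(X³·k[[X]]) is a bijection between the set of k[[X³]]-submodules V ⊆ k[[X]] whose quotient k[[X]]/V is one-dimensional over k, and the set of 2-dimensional k-linear subspaces of the 3-dimensional k-vector space k[[X]]/(X³·k[[X]]). In particular, this set of submodules is in natural bijection with the projective plane ℙ²(k). -/
open PowerSeries Module

section CorankAux

variable {k : Type*} [Field k]

private noncomputable def corankPi : PowerSeries k →ₗ[k] (Fin 3 → k) :=
  LinearMap.pi (fun i : Fin 3 => coeff (i : ℕ))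

private lemma corankPi_ker :
    LinearMap.ker (corankPi (k := k)) =
      (Ideal.span {(X : PowerSeries k) ^ 3}).restrictScalars k := by
  ext f
  simp only [LinearMap.mem_ker, corankPi, Submodule.restrictScalars_mem,
    Ideal.mem_span_singleton, PowerSeries.X_pow_dvd_iff]
  constructor
  · intro h m hm
    have := congrFun h ⟨m, hm⟩
    simpa [LinearMap.pi_apply] using this
  · intro h
    funext i
    simpa [LinearMap.pi_apply] using h i i.isLt

private lemma corankPi_surj : Function.Surjective (corankPi (k := k)) := by
  intro v
  refine ⟨PowerSeries.mk (fun n => if h : n < 3 then v ⟨n, h⟩ else 0), ?_⟩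
  funext i
  simp [corankPi, PowerSeries.coeff_mk, i.isLt]

private noncomputable def corankEquiv :
    (PowerSeries k ⧸ (Ideal.span {(X : PowerSeries k) ^ 3}).restrictScalars k) ≃ₗ[k]
      (Fin 3 → k) :=
  (Submodule.quotEquivOfEq _ _ corankPi_ker.symm).trans
    (LinearMap.quotKerEquivOfSurjective _ corankPi_surj)

private lemma corank_finrank_three :
    finrank k (PowerSeries k ⧸
      (Ideal.span {(X : PowerSeries k) ^ 3}).restrictScalars k) = 3 :=
  (corankEquiv.finrank_eq).trans (Module.finrank_fin_fun k)

variable (φ : PowerSeries k →ₐ[k] PowerSeries k)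
  (hφ : ∀ (f : PowerSeries k) (n : ℕ),
      coeff n (φ f) = if 3 ∣ n then coeff (n / 3) f else 0)

include hφ

private lemma phi_X : φ X = (X : PowerSeries k) ^ 3 := by
  ext n
  rw [hφ, PowerSeries.coeff_X_pow]
  simp only [PowerSeries.coeff_X]
  split_ifs <;> first | rfl | omega

private lemma phi_C (c : k) : φ (C c) = C c := by
  ext n
  rw [hφ, PowerSeries.coeff_C, PowerSeries.coeff_C]
  split_ifs <;> first | rfl | omega

/-- Any corank-one stable subspace contains `X^3·k[[X]]`. -/
private lemma span_le_of_stable (V : Submodule k (PowerSeries k))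
    (hstab : ∀ (f : PowerSeries k), ∀ v ∈ V, φ f * v ∈ V)
    (hrk : finrank k (PowerSeries k ⧸ V) = 1) :
    (Ideal.span {(X : PowerSeries k) ^ 3}).restrictScalars k ≤ V := by
  obtain ⟨v, hv0, hspan⟩ := finrank_eq_one_iff'.mp hrk
  obtain ⟨e₀, he₀⟩ := V.mkQ_surjective v
  obtain ⟨c, hc⟩ := hspan (V.mkQ ((X : PowerSeries k) ^ 3 * e₀))
  have key : (X : PowerSeries k) ^ 3 * e₀ - c • e₀ ∈ V := by
    rw [← Submodule.Quotient.mk_eq_zero]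
    have : V.mkQ ((X : PowerSeries k) ^ 3 * e₀ - c • e₀)
        = V.mkQ ((X : PowerSeries k) ^ 3 * e₀) - c • V.mkQ e₀ := by
      simp [map_sub, map_smul]
    rw [show (Submodule.Quotient.mk ((X : PowerSeries k) ^ 3 * e₀ - c • e₀) :
        PowerSeries k ⧸ V) = V.mkQ ((X : PowerSeries k) ^ 3 * e₀ - c • e₀) from rfl, this,
      ← hc, he₀, sub_self]
  have hc0 : c = 0 := by
    by_contra hc0
    have hu : IsUnit ((X : PowerSeries k) - C c) := by
      rw [PowerSeries.isUnit_iff_constantCoeff]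
      simp [isUnit_iff_ne_zero, hc0]
    obtain ⟨u, hu⟩ := hu
    have hw : ((X : PowerSeries k) - C c) * (↑u⁻¹ : PowerSeries k) = 1 := by
      rw [← hu]; exact u.mul_inv
    have hφw : ((X : PowerSeries k) ^ 3 - C c) * φ (↑u⁻¹ : PowerSeries k) = 1 := by
      have := congrArg φ hw
      rw [map_mul, map_one, map_sub, phi_X φ hφ, phi_C φ hφ] at this
      exact this
    have he₀V : e₀ ∈ V := by
      have : e₀ = φ (↑u⁻¹ : PowerSeries k) *
          ((X : PowerSeries k) ^ 3 * e₀ - c • e₀) := by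
        rw [PowerSeries.smul_eq_C_mul]
        calc e₀ = (((X : PowerSeries k) ^ 3 - C c) * φ (↑u⁻¹ : PowerSeries k)) * e₀ := by
              rw [hφw, one_mul]
          _ = φ (↑u⁻¹ : PowerSeries k) *
              ((X : PowerSeries k) ^ 3 * e₀ - C c * e₀) := by ring
      rw [this]
      exact hstab _ _ key
    apply hv0
    rw [← he₀, Submodule.mkQ_apply, Submodule.Quotient.mk_eq_zero]
    exact he₀V
  have hX3e₀ : (X : PowerSeries k) ^ 3 * e₀ ∈ V := by
    simpa [hc0] using key
  intro f hf
  rw [Submodule.restrictScalars_mem, Ideal.mem_span_singleton] at hf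
  obtain ⟨g, rfl⟩ := hf
  obtain ⟨d, hd⟩ := hspan (V.mkQ g)
  have hgV : g - d • e₀ ∈ V := by
    rw [← Submodule.Quotient.mk_eq_zero]
    have : V.mkQ (g - d • e₀) = V.mkQ g - d • V.mkQ e₀ := by simp [map_sub, map_smul]
    rw [show (Submodule.Quotient.mk (g - d • e₀) : PowerSeries k ⧸ V)
        = V.mkQ (g - d • e₀) from rfl, this, ← hd, he₀, sub_self]
  have hsplit : (X : PowerSeries k) ^ 3 * g
      = (X : PowerSeries k) ^ 3 * (g - d • e₀) + d • ((X : PowerSeries k) ^ 3 * e₀) := by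
    rw [PowerSeries.smul_eq_C_mul, PowerSeries.smul_eq_C_mul]
    ring
  rw [hsplit]
  refine add_mem ?_ (V.smul_mem d hX3e₀)
  have := hstab X _ hgV
  rwa [phi_X φ hφ] at this

/-- Any subspace containing `X^3·k[[X]]` is stable. -/
private lemma stable_of_span_le (V : Submodule k (PowerSeries k))
    (hMV : (Ideal.span {(X : PowerSeries k) ^ 3}).restrictScalars k ≤ V) :
    ∀ (f : PowerSeries k), ∀ v ∈ V, φ f * v ∈ V := by
  intro f v hv
  have h1 : φ f - C (constantCoeff f) ∈ Ideal.span {(X : PowerSeries k) ^ 3} := by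
    rw [Ideal.mem_span_singleton, PowerSeries.X_pow_dvd_iff]
    intro m hm
    interval_cases m <;>
      rw [map_sub, hφ] <;>
      norm_num [PowerSeries.coeff_C, PowerSeries.coeff_zero_eq_constantCoeff]
  have h2 : (φ f - C (constantCoeff f)) * v ∈
      Ideal.span {(X : PowerSeries k) ^ 3} := Ideal.mul_mem_right _ _ h1
  have hsplit : φ f * v = constantCoeff f • v + (φ f - C (constantCoeff f)) * v := by
    rw [PowerSeries.smul_eq_C_mul]; ring
  rw [hsplit]
  exact add_mem (V.smul_mem _ hv) (hMV ((Submodule.restrictScalars_mem _ _ _).mpr h2))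

end CorankAux

/-- Let `k` be a field of characteristic `3` and `φ : k[[X]] → k[[X]]` the `k`-algebra
homomorphism `X ↦ X³` (characterized on coefficients), so that a `k[[X³]]`-submodule of
`k[[X]]` is a `k`-subspace stable under multiplication by all `φ f`.  The quotient
`k[[X]]/(X³·k[[X]])` is a `3`-dimensional `k`-vector space, and the assignment
`V ↦ V/(X³·k[[X]])` is a bijection from the set of `k[[X³]]`-submodules `V ⊆ k[[X]]`
with `k[[X]]/V` one-dimensional over `k` onto the set of `2`-dimensional `k`-subspaces
of `k[[X]]/(X³·k[[X]])`.  In particular this set of submodules is in bijection with the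
projective plane `ℙ²(k)`. -/
theorem corank_one_submodules_biject_with_projective_plane
    {k : Type*} [Field k] [CharP k 3]
    (φ : PowerSeries k →ₐ[k] PowerSeries k)
    (hφ : ∀ (f : PowerSeries k) (n : ℕ),
      coeff n (φ f) = if 3 ∣ n then coeff (n / 3) f else 0) :
    Module.finrank k
      (PowerSeries k ⧸
        (Ideal.span {(X : PowerSeries k) ^ 3}).restrictScalars k) = 3 ∧
    Set.BijOn
      (fun V : Submodule k (PowerSeries k) =>
        Submodule.map
          ((Ideal.span {(X : PowerSeries k) ^ 3}).restrictScalars k).mkQ V)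
      {V : Submodule k (PowerSeries k) |
        (∀ (f : PowerSeries k), ∀ v ∈ V, φ f * v ∈ V) ∧
        Module.finrank k (PowerSeries k ⧸ V) = 1}
      {W : Submodule k
          (PowerSeries k ⧸
            (Ideal.span {(X : PowerSeries k) ^ 3}).restrictScalars k) |
        Module.finrank k W = 2} ∧
    Nonempty
      ({V : Submodule k (PowerSeries k) //
          (∀ (f : PowerSeries k), ∀ v ∈ V, φ f * v ∈ V) ∧
          Module.finrank k (PowerSeries k ⧸ V) = 1} ≃
        Projectivization k (Fin 3 → k)) := by
  set M : Submodule k (PowerSeries k) :=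
    (Ideal.span {(X : PowerSeries k) ^ 3}).restrictScalars k with hM
  haveI hfd : FiniteDimensional k (PowerSeries k ⧸ M) :=
    (corankEquiv (k := k)).symm.finiteDimensional
  have h3 : finrank k (PowerSeries k ⧸ M) = 3 := corank_finrank_three
  -- dimension count for subspaces between M and k[[X]]
  have hdim : ∀ V : Submodule k (PowerSeries k), M ≤ V →
      finrank k (PowerSeries k ⧸ V) + finrank k (V.map M.mkQ) = 3 := by
    intro V hMV
    have h1 := Submodule.finrank_quotient_add_finrank (V.map M.mkQ)
    have h2 := (Submodule.quotientQuotientEquivQuotient M V hMV).finrank_eq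
    omega
  have hbij : Set.BijOn
      (fun V : Submodule k (PowerSeries k) => Submodule.map M.mkQ V)
      {V : Submodule k (PowerSeries k) |
        (∀ (f : PowerSeries k), ∀ v ∈ V, φ f * v ∈ V) ∧
        Module.finrank k (PowerSeries k ⧸ V) = 1}
      {W : Submodule k (PowerSeries k ⧸ M) | Module.finrank k W = 2} := by
    refine ⟨?_, ?_, ?_⟩
    · rintro V ⟨hstab, hrk⟩
      have hMV := span_le_of_stable φ hφ V hstab hrk
      have := hdim V hMV
      simp only [Set.mem_setOf_eq]
      omega
    · rintro V₁ ⟨hstab₁, hrk₁⟩ V₂ ⟨hstab₂, hrk₂⟩ heq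
      have hMV₁ := span_le_of_stable φ hφ V₁ hstab₁ hrk₁
      have hMV₂ := span_le_of_stable φ hφ V₂ hstab₂ hrk₂
      have e₁ : Submodule.comap M.mkQ (Submodule.map M.mkQ V₁) = V₁ := by
        rw [Submodule.comap_map_eq, Submodule.ker_mkQ, sup_eq_left.mpr hMV₁]
      have e₂ : Submodule.comap M.mkQ (Submodule.map M.mkQ V₂) = V₂ := by
        rw [Submodule.comap_map_eq, Submodule.ker_mkQ, sup_eq_left.mpr hMV₂]
      rw [← e₁, ← e₂]
      simp only at heq
      rw [heq]
    · rintro W hW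
      simp only [Set.mem_setOf_eq] at hW
      have hMV : M ≤ Submodule.comap M.mkQ W := by
        intro x hx
        have : M.mkQ x = 0 := by
          rw [Submodule.mkQ_apply, Submodule.Quotient.mk_eq_zero]
          exact hx
        simp only [Submodule.mem_comap, this]
        exact W.zero_mem
      have hmapeq : Submodule.map M.mkQ (Submodule.comap M.mkQ W) = W :=
        Submodule.map_comap_eq_of_surjective M.mkQ_surjective W
      refine ⟨Submodule.comap M.mkQ W, ⟨stable_of_span_le φ hφ _ hMV, ?_⟩, hmapeq⟩
      have := hdim _ hMV
      rw [hmapeq] at this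
      omega
  refine ⟨h3, hbij, ?_⟩
  -- Build the equivalence with the projective plane
  haveI : FiniteDimensional k (Module.Dual k (PowerSeries k ⧸ M)) := inferInstance
  have hrkdual : ∀ W : Submodule k (PowerSeries k ⧸ M),
      finrank k W + finrank k W.dualAnnihilator = 3 := by
    intro W
    have h1 := Submodule.finrank_quotient_add_finrank W
    have h2 : finrank k ((PowerSeries k ⧸ M) ⧸ W) = finrank k W.dualAnnihilator :=
      (Subspace.quotEquivAnnihilator W).finrank_eq
    omega
  let E2 : {W : Submodule k (PowerSeries k ⧸ M) // finrank k W = 2} ≃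
      {H : Submodule k (Module.Dual k (PowerSeries k ⧸ M)) // finrank k H = 1} :=
    { toFun := fun W => ⟨W.1.dualAnnihilator, by have := hrkdual W.1; have := W.2; omega⟩
      invFun := fun H => ⟨H.1.dualCoannihilator, by
        have h1 := Subspace.finrank_add_finrank_dualCoannihilator_eq H.1
        have h2 : finrank k (Module.Dual k (PowerSeries k ⧸ M)) = 3 := by
          rw [Subspace.dual_finrank_eq]; exact h3
        have h4 := hrkdual H.1.dualCoannihilator
        have h5 : H.1.dualCoannihilator.dualAnnihilator = H.1 :=
          Subspace.dualCoannihilator_dualAnnihilator_eq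
        rw [h5] at h4
        have := H.2
        omega⟩
      left_inv := fun W => Subtype.ext Subspace.dualAnnihilator_dualCoannihilator_eq
      right_inv := fun H => Subtype.ext Subspace.dualCoannihilator_dualAnnihilator_eq }
  let d : Module.Dual k (PowerSeries k ⧸ M) ≃ₗ[k] (Fin 3 → k) :=
    (corankEquiv (k := k)).symm.dualMap.trans (Pi.basisFun k (Fin 3)).toDualEquiv.symm
  let E3 : {H : Submodule k (Module.Dual k (PowerSeries k ⧸ M)) // finrank k H = 1} ≃
      {H : Submodule k (Fin 3 → k) // finrank k H = 1} :=
    Equiv.subtypeEquiv (Submodule.orderIsoMapComap d).toEquiv fun H => by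
      rw [show ((Submodule.orderIsoMapComap d).toEquiv H : Submodule k (Fin 3 → k))
          = H.map (d : Module.Dual k (PowerSeries k ⧸ M) →ₗ[k] (Fin 3 → k)) from rfl,
        LinearEquiv.finrank_map_eq]
  exact ⟨((hbij.equiv _).trans E2).trans
    (E3.trans (Projectivization.equivSubmodule k (Fin 3 → k)).symm)⟩
end

section
/- The kernel of the multiplication map A = k[[X]] ⊗_{k[[X³]]} k[[X]] → k[[X]], f⊗g ↦ f·g, equals the ideal of A generated by w = X⊗1 − 1⊗X; moreover, regarded as a module over k[[X]] acting through the left tensor factor, this kernel is free with basis {w, w²}. -/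
set_option linter.unusedSectionVars false
set_option maxHeartbeats 1000000
set_option synthInstance.maxHeartbeats 400000

open PowerSeries TensorProduct

section Aux

variable {k : Type*} [Field k] [CharP k 3]

/-- extraction of the `i`-th part of a power series: coefficients `3n+i`. -/
noncomputable def part (i : ℕ) (f : PowerSeries k) : PowerSeries k :=
  PowerSeries.mk fun n => coeff (3 * n + i) f

@[simp] lemma coeff_part (i n : ℕ) (f : PowerSeries k) :
    coeff n (part i f) = coeff (3 * n + i) f := coeff_mk _ _

lemma part_add (i : ℕ) (f g : PowerSeries k) :
    part i (f + g) = part i f + part i g := by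
  ext n; simp

lemma three_eq_zero : (3 : PowerSeries k) = 0 := by
  have h : ((3 : ℕ) : PowerSeries k) = PowerSeries.C ((3 : ℕ) : k) :=
    (map_natCast (PowerSeries.C) 3).symm
  have h2 : ((3 : ℕ) : k) = 0 := CharP.cast_eq_zero k 3
  rw [h2, map_zero] at h
  exact_mod_cast h

variable (φ : PowerSeries k →ₐ[k] PowerSeries k)

/-- the element `w = X ⊗ 1 - 1 ⊗ X`. -/
noncomputable def w : PowerSeries k ⊗[φ.range] PowerSeries k :=
  (X : PowerSeries k) ⊗ₜ[φ.range] (1 : PowerSeries k) -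
    (1 : PowerSeries k) ⊗ₜ[φ.range] (X : PowerSeries k)

lemma w_eq : w φ = (X : PowerSeries k) ⊗ₜ[φ.range] ((X : PowerSeries k) ^ 0) -
    ((X : PowerSeries k) ^ 0) ⊗ₜ[φ.range] ((X : PowerSeries k) ^ 1) := by
  simp [w]

lemma w_sq_eq : (w φ) ^ 2 =
    ((X : PowerSeries k) ^ 2) ⊗ₜ[φ.range] ((X : PowerSeries k) ^ 0)
    - X ⊗ₜ[φ.range] ((X : PowerSeries k) ^ 1)
    - (X ⊗ₜ[φ.range] ((X : PowerSeries k) ^ 1)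
        - ((X : PowerSeries k) ^ 0) ⊗ₜ[φ.range] ((X : PowerSeries k) ^ 2)) := by
  have h : ∀ x y : PowerSeries k ⊗[φ.range] PowerSeries k,
      (x - y) ^ 2 = x * x - x * y - (y * x - y * y) := by
    intro x y; ring
  rw [w, h]
  simp only [Algebra.TensorProduct.tmul_mul_tmul, one_mul, mul_one, pow_zero, pow_one, pow_two]

lemma range_mul_tmul (u : PowerSeries k) (hu : u ∈ φ.range) (v t : PowerSeries k) :
    (v * u) ⊗ₜ[φ.range] t = v ⊗ₜ[φ.range] (u * t) := by
  have h1 : ((⟨u, hu⟩ : φ.range) • v) ⊗ₜ[φ.range] t = v ⊗ₜ[φ.range] ((⟨u, hu⟩ : φ.range) • t) :=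
    TensorProduct.smul_tmul _ _ _
  have h2 : (⟨u, hu⟩ : φ.range) • v = v * u := by
    show u * v = v * u; ring
  have h3 : (⟨u, hu⟩ : φ.range) • t = u * t := rfl
  rw [h2, h3] at h1
  exact h1

lemma smul_eq_mul_tmul (c : PowerSeries k) (x : PowerSeries k ⊗[φ.range] PowerSeries k) :
    c • x = (c ⊗ₜ[φ.range] (1 : PowerSeries k)) * x := by
  induction x using TensorProduct.induction_on with
  | zero => simp
  | tmul s t =>
    rw [TensorProduct.smul_tmul', Algebra.TensorProduct.tmul_mul_tmul, one_mul, smul_eq_mul]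
  | add x y hx hy => rw [smul_add, hx, hy, mul_add]

lemma w_mem : w φ ∈ RingHom.ker (Algebra.TensorProduct.lmul' (R := φ.range)
    (S := PowerSeries k)).toRingHom := by
  show Algebra.TensorProduct.lmul' (R := φ.range) (S := PowerSeries k) (w φ) = 0
  rw [w, map_sub, Algebra.TensorProduct.lmul'_apply_tmul, Algebra.TensorProduct.lmul'_apply_tmul]
  ring

lemma w_sq_mem : (w φ) ^ 2 ∈ RingHom.ker (Algebra.TensorProduct.lmul' (R := φ.range)
    (S := PowerSeries k)).toRingHom := by
  show Algebra.TensorProduct.lmul' (R := φ.range) (S := PowerSeries k) ((w φ) ^ 2) = 0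
  have hw : Algebra.TensorProduct.lmul' (R := φ.range) (S := PowerSeries k) (w φ) = 0 := w_mem φ
  rw [map_pow, hw]
  ring

noncomputable def Lmap : (Fin 2 → PowerSeries k) →ₗ[PowerSeries k]
    (PowerSeries k ⊗[φ.range] PowerSeries k) where
  toFun c := c 0 • (w φ) + c 1 • ((w φ) ^ 2)
  map_add' c d := by
    show (c 0 + d 0) • (w φ) + (c 1 + d 1) • ((w φ) ^ 2) = _
    rw [add_smul, add_smul]; abel
  map_smul' r c := by
    show (r * c 0) • (w φ) + (r * c 1) • ((w φ) ^ 2) = r • _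
    rw [mul_smul, mul_smul, smul_add]

lemma Lmap_mem (c : Fin 2 → PowerSeries k) :
    Lmap φ c ∈ ((RingHom.ker (Algebra.TensorProduct.lmul' (R := φ.range)
      (S := PowerSeries k)).toRingHom).restrictScalars (PowerSeries k)) := by
  show c 0 • (w φ) + c 1 • ((w φ) ^ 2) ∈ Submodule.restrictScalars _ _
  exact Submodule.add_mem _ (Submodule.smul_mem _ _ (w_mem φ))
    (Submodule.smul_mem _ _ (w_sq_mem φ))

noncomputable def Lres : (Fin 2 → PowerSeries k) →ₗ[PowerSeries k]
    ((RingHom.ker (Algebra.TensorProduct.lmul' (R := φ.range)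
      (S := PowerSeries k)).toRingHom).restrictScalars (PowerSeries k)) :=
  LinearMap.codRestrict _ (Lmap φ) (Lmap_mem φ)

lemma Lres_apply (c : Fin 2 → PowerSeries k) :
    ((Lres φ c : _) : PowerSeries k ⊗[φ.range] PowerSeries k)
      = c 0 • (w φ) + c 1 • ((w φ) ^ 2) := rfl

variable (hφ : ∀ (f : PowerSeries k) (n : ℕ),
      coeff n (φ f) = if 3 ∣ n then coeff (n / 3) f else 0)

include hφ

lemma part_phi_mul_X_pow (i j : ℕ) (hi : i < 3) (hj : j < 3) (h : PowerSeries k) :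
    part i (φ h * X ^ j) = if i = j then h else 0 := by
  ext n
  rw [coeff_part, PowerSeries.coeff_mul_X_pow']
  by_cases hij : i = j
  · subst hij
    rw [if_pos (by omega : i ≤ 3 * n + i), hφ, if_pos ⟨n, by omega⟩, if_pos rfl]
    have h2 : (3 * n + i - i) / 3 = n := by omega
    rw [h2]
  · rw [if_neg hij]
    split_ifs with h1
    · rw [hφ, if_neg (by omega), map_zero]
    · rw [map_zero]

lemma coeff_term (i n : ℕ) (hi : i < 3) (f : PowerSeries k) :
    coeff n (φ (part i f) * X ^ i) = if n % 3 = i then coeff n f else 0 := by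
  rw [PowerSeries.coeff_mul_X_pow']
  by_cases h : n % 3 = i
  · rw [if_pos h, if_pos (by omega : i ≤ n), hφ, if_pos (by omega), coeff_part]
    have h2 : 3 * ((n - i) / 3) + i = n := by omega
    rw [h2]
  · rw [if_neg h]
    by_cases h1 : i ≤ n
    · rw [if_pos h1, hφ, if_neg (by omega)]
    · rw [if_neg h1]

lemma decomp (f : PowerSeries k) :
    φ (part 0 f) * X ^ 0 + φ (part 1 f) * X ^ 1 + φ (part 2 f) * X ^ 2 = f := by
  ext n
  rw [map_add, map_add, coeff_term φ hφ 0 n (by omega), coeff_term φ hφ 1 n (by omega),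
    coeff_term φ hφ 2 n (by omega)]
  have h : n % 3 = 0 ∨ n % 3 = 1 ∨ n % 3 = 2 := by omega
  rcases h with h | h | h <;> simp [h]

lemma part_mul (i : ℕ) (hi : i < 3) (g t : PowerSeries k) :
    part i (φ g * t) = g * part i t := by
  conv_lhs => rw [← decomp φ hφ t]
  have e : φ g * (φ (part 0 t) * X ^ 0 + φ (part 1 t) * X ^ 1 + φ (part 2 t) * X ^ 2)
      = φ (g * part 0 t) * X ^ 0 + φ (g * part 1 t) * X ^ 1 + φ (g * part 2 t) * X ^ 2 := by
    simp only [map_mul]; ring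
  rw [e, part_add, part_add, part_phi_mul_X_pow φ hφ i 0 hi (by omega),
    part_phi_mul_X_pow φ hφ i 1 hi (by omega), part_phi_mul_X_pow φ hφ i 2 hi (by omega)]
  interval_cases i <;> simp

noncomputable def nmap (i : ℕ) (hi : i < 3) : PowerSeries k →ₗ[φ.range] PowerSeries k where
  toFun t := φ (part i t)
  map_add' a b := by
    show φ (part i (a + b)) = φ (part i a) + φ (part i b)
    rw [part_add, map_add]
  map_smul' r t := by
    obtain ⟨g, hg⟩ := r.2
    have hg' : φ g = (r : PowerSeries k) := hg
    have h2 : ∀ s : PowerSeries k, r • s = φ g * s := by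
      intro s; rw [hg']; rfl
    show φ (part i (r • t)) = r • φ (part i t)
    have h3 : r • φ (part i t) = φ g * φ (part i t) := h2 _
    rw [h2 t, part_mul φ hφ i hi, map_mul, h3]

noncomputable def emap (i : ℕ) (hi : i < 3) :
    (PowerSeries k ⊗[φ.range] PowerSeries k) →ₗ[PowerSeries k] PowerSeries k :=
  TensorProduct.AlgebraTensorModule.lift
    { toFun := fun s => s • nmap φ hφ i hi
      map_add' := fun a b => add_smul a b _
      map_smul' := fun c s => by simp [mul_smul] }

lemma emap_tmul (i : ℕ) (hi : i < 3) (s t : PowerSeries k) :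
    emap φ hφ i hi (s ⊗ₜ[φ.range] t) = s * φ (part i t) := by
  simp [emap, nmap]

lemma emap_tmul_pow (i j : ℕ) (hi : i < 3) (hj : j < 3) (s : PowerSeries k) :
    emap φ hφ i hi (s ⊗ₜ[φ.range] (X ^ j)) = if i = j then s else 0 := by
  rw [emap_tmul]
  have h1 : part i ((X : PowerSeries k) ^ j) = if i = j then 1 else 0 := by
    have := part_phi_mul_X_pow φ hφ i j hi hj 1
    simpa using this
  rw [h1]
  split_ifs <;> simp

lemma rep (a : PowerSeries k ⊗[φ.range] PowerSeries k) :
    a = emap φ hφ 0 (by omega) a ⊗ₜ[φ.range] (X ^ 0)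
      + emap φ hφ 1 (by omega) a ⊗ₜ[φ.range] (X ^ 1)
      + emap φ hφ 2 (by omega) a ⊗ₜ[φ.range] (X ^ 2) := by
  induction a using TensorProduct.induction_on with
  | zero => simp
  | tmul s t =>
    rw [emap_tmul φ hφ 0 (by omega), emap_tmul φ hφ 1 (by omega), emap_tmul φ hφ 2 (by omega)]
    rw [range_mul_tmul φ _ (AlgHom.mem_range_self φ _),
      range_mul_tmul φ _ (AlgHom.mem_range_self φ _),
      range_mul_tmul φ _ (AlgHom.mem_range_self φ _)]
    rw [← TensorProduct.tmul_add, ← TensorProduct.tmul_add]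
    conv_lhs => rw [← decomp φ hφ t]
  | add x y hx hy =>
    conv_lhs => rw [hx, hy]
    rw [map_add, map_add, map_add, TensorProduct.add_tmul, TensorProduct.add_tmul,
      TensorProduct.add_tmul]
    abel

lemma ext_of_emap (a b : PowerSeries k ⊗[φ.range] PowerSeries k)
    (h0 : emap φ hφ 0 (by omega) a = emap φ hφ 0 (by omega) b)
    (h1 : emap φ hφ 1 (by omega) a = emap φ hφ 1 (by omega) b)
    (h2 : emap φ hφ 2 (by omega) a = emap φ hφ 2 (by omega) b) : a = b := by
  rw [rep φ hφ a, rep φ hφ b, h0, h1, h2]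

lemma mu_eq (a : PowerSeries k ⊗[φ.range] PowerSeries k) :
    Algebra.TensorProduct.lmul' (R := φ.range) (S := PowerSeries k) a
      = emap φ hφ 0 (by omega) a * X ^ 0 + emap φ hφ 1 (by omega) a * X ^ 1
      + emap φ hφ 2 (by omega) a * X ^ 2 := by
  conv_lhs => rw [rep φ hφ a]
  rw [map_add, map_add, Algebra.TensorProduct.lmul'_apply_tmul,
    Algebra.TensorProduct.lmul'_apply_tmul, Algebra.TensorProduct.lmul'_apply_tmul]

lemma emap_w (i : ℕ) (hi : i < 3) :
    emap φ hφ i hi (w φ) = if i = 0 then X else if i = 1 then -1 else 0 := by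
  rw [w_eq, map_sub, emap_tmul_pow φ hφ i 0 hi (by omega), emap_tmul_pow φ hφ i 1 hi (by omega)]
  interval_cases i <;> simp

lemma emap_w_sq (i : ℕ) (hi : i < 3) :
    emap φ hφ i hi ((w φ) ^ 2) = if i = 0 then X ^ 2 else if i = 1 then -(2 * X) else 1 := by
  rw [w_sq_eq, map_sub, map_sub, map_sub, emap_tmul_pow φ hφ i 0 hi (by omega),
    emap_tmul_pow φ hφ i 1 hi (by omega),
    emap_tmul_pow φ hφ i 2 hi (by omega)]
  interval_cases i <;> simp <;> ring

lemma e0w : emap φ hφ 0 (by omega) (w φ) = X := by simpa using emap_w φ hφ 0 (by omega)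
lemma e1w : emap φ hφ 1 (by omega) (w φ) = -1 := by simpa using emap_w φ hφ 1 (by omega)
lemma e2w : emap φ hφ 2 (by omega) (w φ) = 0 := by simpa using emap_w φ hφ 2 (by omega)
lemma e0w2 : emap φ hφ 0 (by omega) ((w φ) ^ 2) = X ^ 2 := by
  simpa using emap_w_sq φ hφ 0 (by omega)
lemma e1w2 : emap φ hφ 1 (by omega) ((w φ) ^ 2) = -(2 * X) := by
  simpa using emap_w_sq φ hφ 1 (by omega)
lemma e2w2 : emap φ hφ 2 (by omega) ((w φ) ^ 2) = 1 := by
  simpa using emap_w_sq φ hφ 2 (by omega)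

lemma key (a : PowerSeries k ⊗[φ.range] PowerSeries k)
    (ha : Algebra.TensorProduct.lmul' (R := φ.range) (S := PowerSeries k) a = 0) :
    a = (emap φ hφ 2 (by omega) a * X - emap φ hφ 1 (by omega) a) • (w φ)
      + (emap φ hφ 2 (by omega) a) • ((w φ) ^ 2) := by
  have h3 : (3 : PowerSeries k) = 0 := three_eq_zero
  have hmu := mu_eq φ hφ a
  rw [ha] at hmu
  apply ext_of_emap φ hφ
  · rw [map_add, map_smul, map_smul, smul_eq_mul, smul_eq_mul, e0w φ hφ, e0w2 φ hφ]
    linear_combination -hmu - emap φ hφ 2 (by omega) a * X ^ 2 * h3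
  · rw [map_add, map_smul, map_smul, smul_eq_mul, smul_eq_mul, e1w φ hφ, e1w2 φ hφ]
    linear_combination (emap φ hφ 2 (by omega) a * X) * h3
  · rw [map_add, map_smul, map_smul, smul_eq_mul, smul_eq_mul, e2w φ hφ, e2w2 φ hφ]
    ring

lemma Lres_bij : Function.Bijective (Lres φ) := by
  constructor
  · intro c d hcd
    have hA : c 0 • (w φ) + c 1 • ((w φ) ^ 2) = d 0 • (w φ) + d 1 • ((w φ) ^ 2) := by
      rw [← Lres_apply φ c, ← Lres_apply φ d, hcd]
    have h2 := congrArg (emap φ hφ 2 (by omega)) hA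
    rw [map_add, map_add, map_smul, map_smul, map_smul, map_smul, smul_eq_mul, smul_eq_mul,
      smul_eq_mul, smul_eq_mul, e2w φ hφ, e2w2 φ hφ] at h2
    have h2' : c 1 = d 1 := by
      rw [mul_zero, mul_zero, mul_one, mul_one, zero_add, zero_add] at h2
      exact h2
    have h1 := congrArg (emap φ hφ 1 (by omega)) hA
    rw [map_add, map_add, map_smul, map_smul, map_smul, map_smul, smul_eq_mul, smul_eq_mul,
      smul_eq_mul, smul_eq_mul, e1w φ hφ, e1w2 φ hφ] at h1
    have h1' : c 0 = d 0 := by linear_combination -h1 - (2 * (X : PowerSeries k)) * h2'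
    funext i
    fin_cases i
    · exact h1'
    · exact h2'
  · intro x
    have hx : Algebra.TensorProduct.lmul' (R := φ.range) (S := PowerSeries k)
        (x : PowerSeries k ⊗[φ.range] PowerSeries k) = 0 := x.2
    have hxk := key φ hφ (x : PowerSeries k ⊗[φ.range] PowerSeries k) hx
    refine ⟨![emap φ hφ 2 (by omega) (x : PowerSeries k ⊗[φ.range] PowerSeries k) * X
        - emap φ hφ 1 (by omega) (x : PowerSeries k ⊗[φ.range] PowerSeries k),
      emap φ hφ 2 (by omega) (x : PowerSeries k ⊗[φ.range] PowerSeries k)], ?_⟩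
    apply Subtype.ext
    rw [Lres_apply]
    exact hxk.symm

noncomputable def theBasis : Module.Basis (Fin 2) (PowerSeries k)
    ((RingHom.ker (Algebra.TensorProduct.lmul' (R := φ.range)
      (S := PowerSeries k)).toRingHom).restrictScalars (PowerSeries k)) :=
  (Pi.basisFun (PowerSeries k) (Fin 2)).map (LinearEquiv.ofBijective _ (Lres_bij φ hφ))

lemma theBasis_coe (i : Fin 2) :
    ((theBasis φ hφ i : _) : PowerSeries k ⊗[φ.range] PowerSeries k)
      = (Pi.single (M := fun _ : Fin 2 => PowerSeries k) i 1 0) • (w φ)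
        + (Pi.single (M := fun _ : Fin 2 => PowerSeries k) i 1 1) • ((w φ) ^ 2) := by
  rw [theBasis, Module.Basis.map_apply, Pi.basisFun_apply]
  exact Lres_apply φ _

end Aux

/-- Let `k` be a field of characteristic `3` and `φ : k[[X]] → k[[X]]` the `k`-algebra
homomorphism `X ↦ X³` (characterized on coefficients), with range `k[[X³]] = φ.range`.
In `A = k[[X]] ⊗_{k[[X³]]} k[[X]]`, the kernel of the multiplication map `A → k[[X]]`,
`f ⊗ g ↦ f·g`, equals the ideal generated by `w = X⊗1 − 1⊗X`; moreover, as a module over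
`k[[X]]` acting through the left tensor factor, this kernel is free with basis `{w, w²}`. -/
theorem ker_mul_eq_span_w_and_free
    {k : Type*} [Field k] [CharP k 3]
    (φ : PowerSeries k →ₐ[k] PowerSeries k)
    (hφ : ∀ (f : PowerSeries k) (n : ℕ),
      coeff n (φ f) = if 3 ∣ n then coeff (n / 3) f else 0) :
    RingHom.ker (Algebra.TensorProduct.lmul' (R := φ.range)
        (S := PowerSeries k)).toRingHom =
      Ideal.span {(X : PowerSeries k) ⊗ₜ[φ.range] (1 : PowerSeries k) -
        (1 : PowerSeries k) ⊗ₜ[φ.range] (X : PowerSeries k)} ∧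
    ∃ b : Module.Basis (Fin 2) (PowerSeries k)
        ((RingHom.ker (Algebra.TensorProduct.lmul' (R := φ.range)
          (S := PowerSeries k)).toRingHom).restrictScalars (PowerSeries k)),
      ((b 0 : PowerSeries k ⊗[φ.range] PowerSeries k) =
        (X : PowerSeries k) ⊗ₜ[φ.range] (1 : PowerSeries k) -
          (1 : PowerSeries k) ⊗ₜ[φ.range] (X : PowerSeries k)) ∧
      ((b 1 : PowerSeries k ⊗[φ.range] PowerSeries k) =
        ((X : PowerSeries k) ⊗ₜ[φ.range] (1 : PowerSeries k) -
          (1 : PowerSeries k) ⊗ₜ[φ.range] (X : PowerSeries k)) ^ 2) := by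
  constructor
  · apply le_antisymm
    · intro a ha
      have ha' : Algebra.TensorProduct.lmul' (R := φ.range) (S := PowerSeries k) a = 0 := ha
      rw [key φ hφ a ha', smul_eq_mul_tmul φ, smul_eq_mul_tmul φ]
      have hwmem : w φ ∈ Ideal.span {(X : PowerSeries k) ⊗ₜ[φ.range] (1 : PowerSeries k) -
          (1 : PowerSeries k) ⊗ₜ[φ.range] (X : PowerSeries k)} :=
        Ideal.subset_span rfl
      exact Ideal.add_mem _ (Ideal.mul_mem_left _ _ hwmem)
        (by rw [pow_two, ← mul_assoc]; exact Ideal.mul_mem_left _ _ hwmem)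
    · rw [Ideal.span_le, Set.singleton_subset_iff]
      exact w_mem φ
  · refine ⟨theBasis φ hφ, ?_, ?_⟩
    · rw [theBasis_coe φ hφ 0, Pi.single_eq_same, Pi.single_eq_of_ne (by decide),
        one_smul, zero_smul, add_zero]
      rfl
    · rw [theBasis_coe φ hφ 1, Pi.single_eq_same, Pi.single_eq_of_ne (by decide),
        one_smul, zero_smul, zero_add]
      rfl
end

section
/- Let V ⊆ k[[X]] be a k[[X³]]-submodule whose quotient k[[X]]/V is one-dimensional over k. Then w² = (X⊗1 − 1⊗X)² does NOT belong to Im(V), the image of V ⊗_{k[[X³]]} k[[X]] in A = k[[X]] ⊗_{k[[X³]]} k[[X]]. -/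
open PowerSeries TensorProduct

set_option maxHeartbeats 1000000 in
set_option synthInstance.maxHeartbeats 1000000 in
/-- Let `k` be a field of characteristic `3`, `φ : k[[X]] → k[[X]]` the `k`-algebra
homomorphism `X ↦ X³` (characterized on coefficients), with range `k[[X³]] = φ.range`,
and `A = k[[X]] ⊗_{k[[X³]]} k[[X]]`.  Let `V ⊆ k[[X]]` be a `k[[X³]]`-submodule (a
`k`-subspace stable under multiplication by all `φ f`) with `k[[X]]/V` one-dimensional
over `k`, and let `Im(V) ⊆ A` be the additive subgroup generated by the elements `v ⊗ f`
with `v ∈ V`, `f ∈ k[[X]]` (the image of `V ⊗_{k[[X³]]} k[[X]]` in `A`).  Then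
`w² = (X⊗1 − 1⊗X)²` does not belong to `Im(V)`. -/
theorem w_sq_not_mem_image
    {k : Type*} [Field k] [CharP k 3]
    (φ : PowerSeries k →ₐ[k] PowerSeries k)
    (hφ : ∀ (f : PowerSeries k) (n : ℕ),
      coeff n (φ f) = if 3 ∣ n then coeff (n / 3) f else 0)
    (V : Submodule k (PowerSeries k))
    (hVmod : ∀ (f : PowerSeries k), ∀ v ∈ V, φ f * v ∈ V)
    (hdim : Module.finrank k (PowerSeries k ⧸ V) = 1) :
    ((X : PowerSeries k) ⊗ₜ[φ.range] (1 : PowerSeries k) -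
        (1 : PowerSeries k) ⊗ₜ[φ.range] (X : PowerSeries k)) ^ 2 ∉
      AddSubgroup.closure
        {a : PowerSeries k ⊗[φ.range] PowerSeries k |
          ∃ v ∈ V, ∃ f : PowerSeries k, a = v ⊗ₜ[φ.range] f} := by
  intro hmem
  -- basic facts about φ
  have hφX : φ X = X ^ 3 := by
    ext n
    rw [hφ, coeff_X_pow]
    rcases Nat.lt_trichotomy n 3 with h | h | h
    · interval_cases n <;> simp [coeff_X]
    · subst h; simp [coeff_X]
    · by_cases hd : 3 ∣ n
      · rw [if_pos hd, coeff_X, if_neg (by omega), if_neg (by omega)]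
      · rw [if_neg hd, if_neg (by omega)]
  have hφC : ∀ c : k, φ (C c) = C c := by
    intro c
    have h1 : (C c : PowerSeries k) = algebraMap k (PowerSeries k) c := by
      rw [PowerSeries.algebraMap_apply]; simp
    rw [h1, φ.commutes]
  have hdec : ∀ r : φ.range, ∃ h : PowerSeries k,
      (r : PowerSeries k) = C (constantCoeff (r : PowerSeries k)) + X ^ 3 * h := by
    intro r
    obtain ⟨u, hu⟩ := r.2
    have hu' : φ u = (r : PowerSeries k) := hu
    have hdvd : (X : PowerSeries k) ^ 3 ∣
        (r : PowerSeries k) - C (constantCoeff (r : PowerSeries k)) := by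
      rw [X_pow_dvd_iff]
      intro m hm
      rw [map_sub, ← hu', hφ, coeff_C, ← coeff_zero_eq_constantCoeff_apply, hφ]
      interval_cases m
      · norm_num
      · simp [(by decide : ¬ (3:ℕ) ∣ 1)]
      · simp [(by decide : ¬ (3:ℕ) ∣ 2)]
    obtain ⟨h, hh⟩ := hdvd
    exact ⟨h, by rw [← hh]; ring⟩
  -- the quotient is one-dimensional
  have hfin : Module.Finite k (PowerSeries k ⧸ V) :=
    Module.finite_of_finrank_pos (by rw [hdim]; norm_num)
  let b : Module.Basis (Fin 1) k (PowerSeries k ⧸ V) := Module.finBasisOfFinrankEq k _ hdim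
  have hrepr : ∀ y : PowerSeries k ⧸ V, b.repr y 0 • b 0 = y := by
    intro y
    have := b.sum_repr y
    simpa [Fin.sum_univ_one] using this
  have hle : V ≤ V.comap (LinearMap.mulLeft k ((X : PowerSeries k) ^ 3)) := by
    intro v hv
    have : φ X * v ∈ V := hVmod X v hv
    rw [hφX] at this
    simpa [LinearMap.mulLeft_apply] using this
  set T := Submodule.mapQ V V (LinearMap.mulLeft k ((X : PowerSeries k) ^ 3)) hle with hT
  set c := b.repr (T (b 0)) 0 with hc
  have hTb : T (b 0) = c • b 0 := (hrepr _).symm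
  have hTy : ∀ g, V.mkQ ((X : PowerSeries k) ^ 3 * g) = c • V.mkQ g := by
    intro g
    have h1 : V.mkQ ((X : PowerSeries k) ^ 3 * g) = T (V.mkQ g) := by
      rw [hT]
      simp [Submodule.mkQ_apply, Submodule.mapQ_apply, LinearMap.mulLeft_apply]
    rw [h1, ← hrepr (V.mkQ g), map_smul, hTb, smul_comm, hrepr]
  have hc0 : c = 0 := by
    by_contra hcne
    have hcc : constantCoeff ((X : PowerSeries k) - C c) ≠ 0 := by
      simp [hcne]
    have hinv : ((X : PowerSeries k) - C c) * ((X : PowerSeries k) - C c)⁻¹ = 1 :=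
      PowerSeries.mul_inv_cancel _ hcc
    have hall : ∀ g, V.mkQ g = 0 := by
      intro g
      set u := φ (((X : PowerSeries k) - C c)⁻¹) * g with hu
      have e2 : ((X : PowerSeries k) ^ 3 - C c) * φ (((X : PowerSeries k) - C c)⁻¹) = 1 := by
        have : φ (((X : PowerSeries k) - C c) * ((X : PowerSeries k) - C c)⁻¹) = 1 := by
          rw [hinv, map_one]
        rw [← this, map_mul, map_sub, hφX, hφC]
      have e3 : g = (X : PowerSeries k) ^ 3 * u - c • u := by
        rw [smul_eq_C_mul, ← sub_mul, hu, ← mul_assoc, e2, one_mul]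
      calc V.mkQ g = V.mkQ ((X : PowerSeries k) ^ 3 * u) - c • V.mkQ u := by
            rw [e3, map_sub, map_smul]
        _ = 0 := by rw [hTy u, sub_self]
    obtain ⟨g, hg⟩ := Submodule.mkQ_surjective V (b 0)
    exact b.ne_zero 0 (by rw [← hg, hall])
  have hX3V : ∀ g, (X : PowerSeries k) ^ 3 * g ∈ V := by
    intro g
    have := hTy g
    rw [hc0, zero_smul] at this
    rw [Submodule.mkQ_apply] at this
    exact (Submodule.Quotient.mk_eq_zero V).mp this
  -- the functional cutting out V
  set lam : PowerSeries k →ₗ[k] k :=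
    (Finsupp.lapply 0) ∘ₗ (b.repr : (PowerSeries k ⧸ V) →ₗ[k] (Fin 1 →₀ k)) ∘ₗ V.mkQ with hlam
  have hlam_apply : ∀ g, lam g = b.repr (V.mkQ g) 0 := fun g => rfl
  have hlamV : ∀ v ∈ V, lam v = 0 := by
    intro v hv
    have hz : V.mkQ v = 0 := by
      rw [Submodule.mkQ_apply]
      exact (Submodule.Quotient.mk_eq_zero V).mpr hv
    rw [hlam_apply, hz]
    simp
  have hlam_bal : ∀ (r : φ.range) (g : PowerSeries k),
      lam ((r : PowerSeries k) * g) = constantCoeff (r : PowerSeries k) * lam g := by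
    intro r g
    obtain ⟨h, hh⟩ := hdec r
    have e1 : (r : PowerSeries k) * g
        = constantCoeff (r : PowerSeries k) • g + (X : PowerSeries k) ^ 3 * (h * g) := by
      conv_lhs => rw [hh]
      rw [smul_eq_C_mul]; ring
    rw [e1, map_add, map_smul, hlamV _ (hX3V _), add_zero, smul_eq_mul]
  have hcoeff_bal : ∀ j, j < 3 → ∀ (r : φ.range) (f : PowerSeries k),
      coeff j ((r : PowerSeries k) * f)
        = constantCoeff (r : PowerSeries k) * coeff j f := by
    intro j hj r f
    obtain ⟨h, hh⟩ := hdec r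
    have hz : coeff j ((X : PowerSeries k) ^ 3 * (h * f)) = 0 :=
      X_pow_dvd_iff.mp ⟨h * f, rfl⟩ j hj
    conv_lhs => rw [hh]
    rw [add_mul, map_add, mul_assoc, hz, add_zero, ← smul_eq_C_mul, map_smul, smul_eq_mul]
  -- main computation: apply the functional lam ⊗ (coeff j) to w²
  have main : ∀ j, j < 3 →
      lam ((X : PowerSeries k) * X) * coeff j (1 : PowerSeries k)
        - lam X * coeff j (X : PowerSeries k)
        - lam X * coeff j (X : PowerSeries k)
        + lam 1 * coeff j ((X : PowerSeries k) * X) = 0 := by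
    intro j hj
    set B : PowerSeries k →+ PowerSeries k →+ k :=
      AddMonoidHom.mk' (fun g => AddMonoidHom.mk' (fun f => lam g * coeff j f)
          (fun f1 f2 => by simp [mul_add]))
        (fun g1 g2 => by ext f; simp [add_mul]) with hB
    have hBapp : ∀ g f, B g f = lam g * coeff j f := fun g f => rfl
    have hbal : ∀ (r : φ.range) (g f : PowerSeries k), B (r • g) f = B g (r • f) := by
      intro r g f
      have hsm : ∀ (r : φ.range) (g : PowerSeries k), r • g = (r : PowerSeries k) * g :=
        fun r g => rfl
      rw [hBapp, hBapp, hsm, hsm, hlam_bal, hcoeff_bal j hj]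
      ring
    set Φ := TensorProduct.liftAddHom (R := φ.range) B hbal with hΦ
    have hker : AddSubgroup.closure
        {a : PowerSeries k ⊗[φ.range] PowerSeries k |
          ∃ v ∈ V, ∃ f : PowerSeries k, a = v ⊗ₜ[φ.range] f} ≤ Φ.ker := by
      rw [AddSubgroup.closure_le]
      rintro a ⟨v, hv, f, rfl⟩
      have : Φ (v ⊗ₜ[φ.range] f) = 0 := by
        rw [hΦ, TensorProduct.liftAddHom_tmul, hBapp, hlamV v hv, zero_mul]
      simpa [AddMonoidHom.mem_ker] using this
    have hzero : Φ (((X : PowerSeries k) ⊗ₜ[φ.range] (1 : PowerSeries k) -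
        (1 : PowerSeries k) ⊗ₜ[φ.range] (X : PowerSeries k)) ^ 2) = 0 := hker hmem
    have hexp : ((X : PowerSeries k) ⊗ₜ[φ.range] (1 : PowerSeries k) -
          (1 : PowerSeries k) ⊗ₜ[φ.range] (X : PowerSeries k)) ^ 2
        = ((X : PowerSeries k) * X) ⊗ₜ[φ.range] (1 : PowerSeries k)
          - (X : PowerSeries k) ⊗ₜ[φ.range] (X : PowerSeries k)
          - (X : PowerSeries k) ⊗ₜ[φ.range] (X : PowerSeries k)
          + (1 : PowerSeries k) ⊗ₜ[φ.range] ((X : PowerSeries k) * X) := by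
      have expand : ∀ x y : PowerSeries k ⊗[φ.range] PowerSeries k,
          (x - y) ^ 2 = x * x - x * y - y * x + y * y := by
        intro x y; ring
      rw [expand]
      simp only [Algebra.TensorProduct.tmul_mul_tmul, mul_one, one_mul]
    rw [hexp, map_add, map_sub, map_sub] at hzero
    simp only [hΦ, TensorProduct.liftAddHom_tmul] at hzero
    simp only [hBapp] at hzero
    exact hzero
  -- lam is not identically zero on 1, X, X²
  have htri : lam 1 ≠ 0 ∨ lam X ≠ 0 ∨ lam ((X : PowerSeries k) * X) ≠ 0 := by
    by_contra hcon
    push_neg at hcon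
    obtain ⟨h1, h2, h3⟩ := hcon
    have hall : ∀ g, lam g = 0 := by
      intro g
      have hdvd : (X : PowerSeries k) ^ 3 ∣
          (g - (C (coeff 0 g) + coeff 1 g • (X : PowerSeries k)
            + coeff 2 g • ((X : PowerSeries k) * X))) := by
        rw [X_pow_dvd_iff]
        intro m hm
        have hXX : (X : PowerSeries k) * X = X ^ 2 := by ring
        interval_cases m <;>
          simp [hXX, coeff_X_pow, coeff_C, coeff_X, map_sub, map_add]
      obtain ⟨h, hh⟩ := hdvd
      have e : g = C (coeff 0 g) + coeff 1 g • (X : PowerSeries k)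
          + coeff 2 g • ((X : PowerSeries k) * X) + (X : PowerSeries k) ^ 3 * h := by
        rw [← hh]; ring
      have hC : (C (coeff 0 g) : PowerSeries k) = coeff 0 g • (1 : PowerSeries k) := by
        rw [smul_eq_C_mul, mul_one]
      rw [e, map_add, map_add, map_add, map_smul, map_smul, hlamV _ (hX3V h), hC, map_smul]
      simp [h1, h2, h3]
    obtain ⟨g, hg⟩ := Submodule.mkQ_surjective V (b 0)
    have hz : b.repr (b 0) 0 = 0 := by
      rw [← hg]
      exact hall g
    rw [b.repr_self, Finsupp.single_eq_same] at hz
    exact one_ne_zero hz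
  rcases htri with hα | hβ | hγ
  · have h2 := main 2 (by norm_num)
    have hXX : (X : PowerSeries k) * X = X ^ 2 := by ring
    rw [hXX] at h2
    simp [coeff_one, coeff_X, coeff_X_pow] at h2
    exact hα h2
  · have h1 := main 1 (by norm_num)
    have hXX : (X : PowerSeries k) * X = X ^ 2 := by ring
    rw [hXX] at h1
    simp [coeff_one, coeff_X, coeff_X_pow] at h1
    have h3 : (3 : k) = 0 := by exact_mod_cast CharP.cast_eq_zero k 3
    apply hβ
    linear_combination lam X * h3 + h1
  · have h0 := main 0 (by norm_num)
    have hXX : (X : PowerSeries k) * X = X ^ 2 := by ring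
    rw [hXX] at h0
    simp [coeff_one, coeff_X, coeff_X_pow] at h0
    exact hγ (by rw [hXX]; exact h0)
end

section
/- Let V ⊆ k[[X]] be a k[[X³]]-submodule whose quotient k[[X]]/V is one-dimensional over k. Then w²·(1⊗X) belongs to Im(V), the image of V ⊗_{k[[X³]]} k[[X]] in A = k[[X]] ⊗_{k[[X³]]} k[[X]], if and only if both X ∈ V and X² ∈ V. -/
set_option maxHeartbeats 1000000
set_option synthInstance.maxHeartbeats 1000000

open PowerSeries TensorProduct

private theorem aux_X3_mem {k : Type*} [Field k]
    (V : Submodule k (PowerSeries k))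
    (hV3 : ∀ v ∈ V, (X : PowerSeries k) ^ 3 * v ∈ V)
    (hdim : Module.finrank k (PowerSeries k ⧸ V) = 1) :
    ∀ f : PowerSeries k, (X : PowerSeries k) ^ 3 * f ∈ V := by
  set L : PowerSeries k →ₗ[k] PowerSeries k := LinearMap.mulLeft k ((X : PowerSeries k) ^ 3) with hL
  have hle : V ≤ V.comap L := fun v hv => hV3 v hv
  set m : (PowerSeries k ⧸ V) →ₗ[k] (PowerSeries k ⧸ V) := V.mapQ V L hle with hm
  have hmq : ∀ g : PowerSeries k, m (V.mkQ g) = V.mkQ ((X : PowerSeries k) ^ 3 * g) := by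
    intro g
    rw [Submodule.mkQ_apply, hm, Submodule.mapQ_apply]
    rfl
  obtain ⟨v, hv0, hv⟩ := (finrank_eq_one_iff' ).mp hdim
  obtain ⟨c, hc⟩ := hv (m v)
  have hsc : ∀ x, m x = c • x := by
    intro x
    obtain ⟨d, rfl⟩ := hv x
    rw [map_smul, ← hc, smul_comm]
  rcases eq_or_ne c 0 with rfl | hc0
  · intro f
    have := hmq f
    rw [hsc, zero_smul] at this
    rw [← Submodule.Quotient.mk_eq_zero, ← Submodule.mkQ_apply, ← this]
  · exfalso
    have hunit : IsUnit ((X : PowerSeries k) ^ 3 - C c) := by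
      rw [isUnit_iff_constantCoeff]
      simp [hc0]
    have hall : ∀ g : PowerSeries k, V.mkQ g = 0 := by
      intro g
      obtain ⟨u, hu⟩ := hunit
      have key : ((X : PowerSeries k) ^ 3 - C c) * (↑u⁻¹ * g) = g := by
        rw [← hu]; exact u.mul_inv_cancel_left g
      calc V.mkQ g = V.mkQ (((X:PowerSeries k)^3 - C c) * (↑u⁻¹ * g)) := by rw [key]
        _ = V.mkQ ((X:PowerSeries k)^3 * (↑u⁻¹ * g)) - V.mkQ (C c * (↑u⁻¹ * g)) := by
            rw [sub_mul, map_sub]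
        _ = m (V.mkQ (↑u⁻¹ * g)) - c • V.mkQ (↑u⁻¹ * g) := by
            rw [hmq, ← smul_eq_C_mul, map_smul]
        _ = 0 := by rw [hsc, sub_self]
    have : v = 0 := by
      obtain ⟨g, rfl⟩ := V.mkQ_surjective v
      exact hall g
    exact hv0 this

private theorem aux_psi {k : Type*} [Field k] (R : Subalgebra k (PowerSeries k))
    (V : Submodule k (PowerSeries k)) (j : ℕ)
    (hmk : ∀ r : R, ∀ g : PowerSeries k,
      V.mkQ ((r : PowerSeries k) * g) = constantCoeff (r : PowerSeries k) • V.mkQ g)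
    (hco : ∀ r : R, ∀ f : PowerSeries k,
      coeff j ((r : PowerSeries k) * f) = constantCoeff (r : PowerSeries k) * coeff j f) :
    ∃ ψ : (PowerSeries k ⊗[R] PowerSeries k) →+ (PowerSeries k ⧸ V),
      ∀ g f : PowerSeries k, ψ (g ⊗ₜ[R] f) = coeff j f • V.mkQ g := by
  refine ⟨TensorProduct.liftAddHom
    (AddMonoidHom.mk' (fun g => AddMonoidHom.mk'
        (fun f => coeff j f • V.mkQ g)
        (fun f₁ f₂ => by rw [map_add, add_smul]))
      (fun g₁ g₂ => by
        ext f
        simp only [AddMonoidHom.mk'_apply, AddMonoidHom.add_apply, map_add, smul_add]))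
    ?_, fun g f => rfl⟩
  intro r g f
  simp only [AddMonoidHom.mk'_apply]
  rw [Subalgebra.smul_def, Subalgebra.smul_def, smul_eq_mul, smul_eq_mul, hmk, hco,
    smul_smul, mul_comm]

private theorem aux_key {k : Type*} [Field k] [CharP k 3]
    (φ : PowerSeries k →ₐ[k] PowerSeries k)
    (hφX : φ X = X ^ 3) :
    (((X : PowerSeries k) ⊗ₜ[φ.range] (1 : PowerSeries k) -
        (1 : PowerSeries k) ⊗ₜ[φ.range] (X : PowerSeries k)) ^ 2 *
        ((1 : PowerSeries k) ⊗ₜ[φ.range] (X : PowerSeries k)))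
      = ((X : PowerSeries k)^2) ⊗ₜ[φ.range] (X : PowerSeries k)
        + (X : PowerSeries k) ⊗ₜ[φ.range] ((X : PowerSeries k)^2)
        + ((X : PowerSeries k)^3) ⊗ₜ[φ.range] (1 : PowerSeries k) := by
  set a : PowerSeries k ⊗[φ.range] PowerSeries k := (X : PowerSeries k) ⊗ₜ[φ.range] 1 with ha
  set b : PowerSeries k ⊗[φ.range] PowerSeries k := (1 : PowerSeries k) ⊗ₜ[φ.range] X with hb
  have e1 : (a - b) ^ 2 * b = a ^ 2 * b + a * b ^ 2 + b ^ 3 - 3 * (a * b ^ 2) := by ring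
  have h3k : (3 : PowerSeries k) = 0 := by
    rw [← map_ofNat C 3, show ((3 : k) = 0) by exact_mod_cast CharP.cast_eq_zero k 3, map_zero]
  have hab2 : a * b ^ 2 = (X : PowerSeries k) ⊗ₜ[φ.range] ((X:PowerSeries k)^2) := by
    rw [ha, hb, pow_two, Algebra.TensorProduct.tmul_mul_tmul,
      Algebra.TensorProduct.tmul_mul_tmul, one_mul, one_mul, mul_one, ← pow_two]
  have ha2b : a ^ 2 * b = ((X : PowerSeries k)^2) ⊗ₜ[φ.range] (X:PowerSeries k) := by
    rw [ha, hb, pow_two, Algebra.TensorProduct.tmul_mul_tmul,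
      Algebra.TensorProduct.tmul_mul_tmul, one_mul, one_mul, mul_one, ← pow_two]
  have hb3 : b ^ 3 = ((X : PowerSeries k)^3) ⊗ₜ[φ.range] (1 : PowerSeries k) := by
    rw [hb, pow_succ, pow_two, Algebra.TensorProduct.tmul_mul_tmul,
      Algebra.TensorProduct.tmul_mul_tmul, one_mul, one_mul, mul_assoc, ← pow_two,
      ← pow_succ']
    have hmem : (X : PowerSeries k) ^ 3 ∈ φ.range := ⟨X, hφX⟩
    have hs : ((⟨(X : PowerSeries k)^3, hmem⟩ : φ.range) • (1 : PowerSeries k)) = (X : PowerSeries k)^3 := by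
      rw [Algebra.smul_def, Subalgebra.algebraMap_eq, mul_one]
      rfl
    calc (1 : PowerSeries k) ⊗ₜ[φ.range] ((X:PowerSeries k) ^ 3)
        = (1 : PowerSeries k) ⊗ₜ[φ.range] ((⟨(X : PowerSeries k)^3, hmem⟩ : φ.range) • (1:PowerSeries k)) := by
          rw [hs]
      _ = ((⟨(X : PowerSeries k)^3, hmem⟩ : φ.range) • (1:PowerSeries k)) ⊗ₜ[φ.range] (1 : PowerSeries k) := by
          rw [TensorProduct.tmul_smul, TensorProduct.smul_tmul']
      _ = ((X : PowerSeries k)^3) ⊗ₜ[φ.range] (1 : PowerSeries k) := by rw [hs]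
  have h30 : (3 : PowerSeries k ⊗[φ.range] PowerSeries k) * (a * b ^ 2) = 0 := by
    rw [hab2]
    set t := (X : PowerSeries k) ⊗ₜ[φ.range] ((X:PowerSeries k)^2) with ht
    have e : (3 : PowerSeries k ⊗[φ.range] PowerSeries k) * t = t + t + t := by ring
    rw [e, ht, ← TensorProduct.tmul_add, ← TensorProduct.tmul_add,
      show ((X:PowerSeries k)^2 + X^2 + X^2) = 3 * X^2 by ring, h3k, zero_mul,
      TensorProduct.tmul_zero]
  rw [e1, h30, sub_zero, hab2, ha2b, hb3]

/-- Let `k` be a field of characteristic `3`, `φ : k[[X]] → k[[X]]` the `k`-algebra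
homomorphism `X ↦ X³` (characterized on coefficients), with range `k[[X³]] = φ.range`,
and `A = k[[X]] ⊗_{k[[X³]]} k[[X]]`.  Let `V ⊆ k[[X]]` be a `k[[X³]]`-submodule (a
`k`-subspace stable under multiplication by all `φ f`) with `k[[X]]/V` one-dimensional
over `k`, and let `Im(V) ⊆ A` be the additive subgroup generated by the elements `v ⊗ f`
with `v ∈ V`, `f ∈ k[[X]]`.  Then, with `w = X⊗1 − 1⊗X`, one has
`w²·(1⊗X) ∈ Im(V)` if and only if both `X ∈ V` and `X² ∈ V`. -/
theorem w_sq_mul_one_tmul_X_mem_image_iff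
    {k : Type*} [Field k] [CharP k 3]
    (φ : PowerSeries k →ₐ[k] PowerSeries k)
    (hφ : ∀ (f : PowerSeries k) (n : ℕ),
      coeff n (φ f) = if 3 ∣ n then coeff (n / 3) f else 0)
    (V : Submodule k (PowerSeries k))
    (hVmod : ∀ (f : PowerSeries k), ∀ v ∈ V, φ f * v ∈ V)
    (hdim : Module.finrank k (PowerSeries k ⧸ V) = 1) :
    (((X : PowerSeries k) ⊗ₜ[φ.range] (1 : PowerSeries k) -
        (1 : PowerSeries k) ⊗ₜ[φ.range] (X : PowerSeries k)) ^ 2 *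
        ((1 : PowerSeries k) ⊗ₜ[φ.range] (X : PowerSeries k)) ∈
      AddSubgroup.closure
        {a : PowerSeries k ⊗[φ.range] PowerSeries k |
          ∃ v ∈ V, ∃ f : PowerSeries k, a = v ⊗ₜ[φ.range] f}) ↔
      ((X : PowerSeries k) ∈ V ∧ (X : PowerSeries k) ^ 2 ∈ V) := by
  have hφX : φ X = X ^ 3 := by
    ext n
    rw [hφ, coeff_X_pow]
    rcases eq_or_ne n 3 with rfl | hn
    · norm_num [coeff_X]
    · rw [if_neg hn]
      split_ifs with h
      · rw [coeff_X, if_neg (by rcases h with ⟨c, rfl⟩; omega)]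
      · rfl
  have hV3' : ∀ f : PowerSeries k, (X : PowerSeries k) ^ 3 * f ∈ V :=
    aux_X3_mem V (fun v hv => hφX ▸ hVmod X v hv) hdim
  -- decomposition of elements of the range
  have hdec : ∀ r : φ.range, ∃ t : PowerSeries k,
      (r : PowerSeries k) = C (constantCoeff (r : PowerSeries k)) + X ^ 3 * t := by
    intro r
    have hdvd : (X : PowerSeries k) ^ 3 ∣
        (r : PowerSeries k) - C (constantCoeff (r : PowerSeries k)) := by
      rw [X_pow_dvd_iff]
      intro m hm
      obtain ⟨h, hh⟩ := r.2
      have hh' : φ h = (r : PowerSeries k) := hh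
      rw [map_sub, coeff_C]
      interval_cases m
      · rw [if_pos rfl, coeff_zero_eq_constantCoeff_apply, sub_self]
      · rw [if_neg one_ne_zero, ← hh', hφ, if_neg (by omega), sub_zero]
      · rw [if_neg two_ne_zero, ← hh', hφ, if_neg (by omega), sub_zero]
    obtain ⟨t, ht⟩ := hdvd
    exact ⟨t, by rw [← ht]; ring⟩
  have hmk : ∀ r : φ.range, ∀ g : PowerSeries k,
      V.mkQ ((r : PowerSeries k) * g) = constantCoeff (r : PowerSeries k) • V.mkQ g := by
    intro r g
    obtain ⟨t, ht⟩ := hdec r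
    conv_lhs => rw [ht]
    rw [add_mul, map_add, mul_assoc,
      show V.mkQ ((X:PowerSeries k)^3 * (t*g)) = 0 by
        rw [Submodule.mkQ_apply, Submodule.Quotient.mk_eq_zero]; exact hV3' _,
      add_zero, ← smul_eq_C_mul, map_smul]
  have hco : ∀ j : ℕ, j < 3 → ∀ r : φ.range, ∀ f : PowerSeries k,
      coeff j ((r : PowerSeries k) * f)
        = constantCoeff (r : PowerSeries k) * coeff j f := by
    intro j hj r f
    obtain ⟨t, ht⟩ := hdec r
    conv_lhs => rw [ht]
    rw [add_mul, map_add, coeff_C_mul, mul_assoc,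
      show coeff j ((X:PowerSeries k)^3 * (t*f)) = 0 from
        X_pow_dvd_iff.mp (dvd_mul_right _ _) j hj,
      add_zero]
  have key := aux_key φ hφX
  constructor
  · intro hmem
    have hz : ∀ j : ℕ, j < 3 →
        (coeff j (X : PowerSeries k)) • V.mkQ ((X:PowerSeries k)^2)
        + (coeff j ((X:PowerSeries k)^2)) • V.mkQ (X:PowerSeries k)
        + (coeff j (1:PowerSeries k)) • V.mkQ ((X:PowerSeries k)^3) = 0 := by
      intro j hj
      obtain ⟨ψ, hψ⟩ := aux_psi φ.range V j hmk (hco j hj)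
      have hker : AddSubgroup.closure
          {a : PowerSeries k ⊗[φ.range] PowerSeries k |
            ∃ v ∈ V, ∃ f : PowerSeries k, a = v ⊗ₜ[φ.range] f} ≤ ψ.ker := by
        rw [AddSubgroup.closure_le]
        rintro a ⟨v, hv, f, rfl⟩
        rw [SetLike.mem_coe, AddMonoidHom.mem_ker, hψ,
          show V.mkQ v = 0 by rw [Submodule.mkQ_apply, Submodule.Quotient.mk_eq_zero]; exact hv,
          smul_zero]
      have h0 : ψ _ = 0 := AddMonoidHom.mem_ker.mp (hker hmem)
      rw [key, map_add, map_add, hψ, hψ, hψ] at h0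
      exact h0
    constructor
    · have := hz 2 (by norm_num)
      rw [coeff_X, if_neg (by norm_num), zero_smul, coeff_X_pow, if_pos rfl, one_smul,
        coeff_one, if_neg (by norm_num), zero_smul, zero_add, add_zero] at this
      rwa [Submodule.mkQ_apply, Submodule.Quotient.mk_eq_zero] at this
    · have := hz 1 (by norm_num)
      rw [coeff_X, if_pos rfl, one_smul, coeff_X_pow, if_neg (by norm_num), zero_smul,
        coeff_one, if_neg (by norm_num), zero_smul, add_zero, add_zero] at this
      rwa [Submodule.mkQ_apply, Submodule.Quotient.mk_eq_zero] at this
  · rintro ⟨hX, hX2⟩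
    rw [key]
    have hX3 : (X : PowerSeries k) ^ 3 ∈ V := by
      have := hV3' 1
      rwa [mul_one] at this
    exact add_mem (add_mem
      (AddSubgroup.subset_closure ⟨(X:PowerSeries k)^2, hX2, X, rfl⟩)
      (AddSubgroup.subset_closure ⟨(X:PowerSeries k), hX, (X:PowerSeries k)^2, rfl⟩))
      (AddSubgroup.subset_closure ⟨(X:PowerSeries k)^3, hX3, 1, rfl⟩)
end

section
/- Let V ⊆ k[[X]] be a k[[X³]]-submodule whose quotient k[[X]]/V is one-dimensional over k. Then w²·(1⊗X²) belongs to Im(V), the image of V ⊗_{k[[X³]]} k[[X]] in A = k[[X]] ⊗_{k[[X³]]} k[[X]], if and only if X² ∈ V. -/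
set_option maxHeartbeats 1000000
set_option synthInstance.maxHeartbeats 400000
open PowerSeries TensorProduct

section Aux
variable {k : Type*} [Field k]

noncomputable def tauAux (j : ℕ) (f : PowerSeries k) : PowerSeries k :=
  PowerSeries.mk fun m => coeff (3 * m + j) f

lemma coeff_tauAux (j m : ℕ) (f : PowerSeries k) :
    coeff m (tauAux j f) = coeff (3 * m + j) f := coeff_mk _ _

lemma tauAux_add (j : ℕ) (f g : PowerSeries k) :
    tauAux j (f + g) = tauAux j f + tauAux j g := by
  ext m; simp [coeff_tauAux]

lemma tauAux2_one : tauAux 2 (1 : PowerSeries k) = 0 := by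
  ext m; rw [coeff_tauAux, coeff_one]; simp

lemma tauAux2_X : tauAux 2 (X : PowerSeries k) = 0 := by
  ext m; rw [coeff_tauAux, coeff_X, if_neg (by omega)]; simp

lemma tauAux2_X_sq : tauAux 2 ((X : PowerSeries k) ^ 2) = 1 := by
  ext m
  rw [coeff_tauAux, coeff_X_pow, coeff_one]
  split_ifs with h1 h2 h2 <;> first | rfl | omega

variable (φ : PowerSeries k →ₐ[k] PowerSeries k)
  (hφ : ∀ (f : PowerSeries k) (n : ℕ),
      coeff n (φ f) = if 3 ∣ n then coeff (n / 3) f else 0)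

include hφ

lemma phiXAux : φ X = X ^ 3 := by
  ext n
  rw [hφ, coeff_X_pow, coeff_X]
  split_ifs with h1 h2 h2 <;> first | rfl | omega

lemma decompAux (f : PowerSeries k) :
    f = φ (tauAux 0 f) + X ^ 1 * φ (tauAux 1 f) + X ^ 2 * φ (tauAux 2 f) := by
  ext n
  obtain ⟨q, r, hr, rfl⟩ : ∃ q r, r < 3 ∧ n = 3 * q + r :=
    ⟨n / 3, n % 3, Nat.mod_lt _ (by norm_num), by omega⟩
  simp only [map_add, coeff_X_pow_mul', hφ, coeff_tauAux]
  interval_cases r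
  · have h0 : (3:ℕ) ∣ 3*q+0 := by omega
    have h4 : 3*((3*q+0)/3)+0 = 3*q+0 := by omega
    rw [if_pos h0, h4]
    have : ∀ b c : k, b = 0 → c = 0 → coeff (3*q+0) f = coeff (3*q+0) f + b + c := by
      intro b c hb hc; simp [hb, hc]
    apply this <;> split_ifs with h1 h2 <;> first | rfl | (exfalso; omega)
  · have h0 : ¬ (3:ℕ) ∣ 3*q+1 := by omega
    have h1 : (1:ℕ) ≤ 3*q+1 := by omega
    have h2 : (3:ℕ) ∣ 3*q+1-1 := by omega
    have h4 : 3*((3*q+1-1)/3)+1 = 3*q+1 := by omega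
    rw [if_neg h0, if_pos h1, if_pos h2, h4]
    have h5 : ∀ c : k, c = 0 → coeff (3*q+1) f = 0 + coeff (3*q+1) f + c := by
      intro c hc; simp [hc]
    apply h5; split_ifs with h6 h7 <;> first | rfl | (exfalso; omega)
  · have h0 : ¬ (3:ℕ) ∣ 3*q+2 := by omega
    have h1 : ¬ (3:ℕ) ∣ 3*q+2-1 := by omega
    have h2 : (2:ℕ) ≤ 3*q+2 := by omega
    have h2' : (1:ℕ) ≤ 3*q+2 := by omega
    have h3 : (3:ℕ) ∣ 3*q+2-2 := by omega
    have h4 : 3*((3*q+2-2)/3)+2 = 3*q+2 := by omega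
    rw [if_neg h0, if_pos h2', if_neg h1, if_pos h2, if_pos h3, h4, zero_add, zero_add]

lemma tauAux2_phi (a : PowerSeries k) : tauAux 2 (φ a) = 0 := by
  ext m; rw [coeff_tauAux, hφ, if_neg (by omega : ¬ (3:ℕ) ∣ 3*m+2)]; simp

lemma tauAux2_X_mul_phi (b : PowerSeries k) : tauAux 2 (X ^ 1 * φ b) = 0 := by
  ext m
  rw [coeff_tauAux, coeff_X_pow_mul', if_pos (by omega : (1:ℕ) ≤ 3*m+2), hφ,
    if_neg (by omega : ¬ (3:ℕ) ∣ 3*m+2-1)]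
  simp

lemma tauAux2_X2_mul_phi (c : PowerSeries k) : tauAux 2 (X ^ 2 * φ c) = c := by
  ext m
  rw [coeff_tauAux, coeff_X_pow_mul', if_pos (by omega : (2:ℕ) ≤ 3*m+2), hφ,
    if_pos (by omega : (3:ℕ) ∣ 3*m+2-2), (by omega : (3*m+2-2)/3 = m)]

lemma tauAux2_phi_mul (u h : PowerSeries k) :
    tauAux 2 (φ u * h) = u * tauAux 2 h := by
  conv_lhs => rw [decompAux φ hφ h]
  rw [mul_add, mul_add, tauAux_add, tauAux_add]
  have e1 : φ u * φ (tauAux 0 h) = φ (u * tauAux 0 h) := (map_mul φ _ _).symm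
  have e2 : φ u * (X ^ 1 * φ (tauAux 1 h)) = X ^ 1 * φ (u * tauAux 1 h) := by
    rw [map_mul]; ring
  have e3 : φ u * (X ^ 2 * φ (tauAux 2 h)) = X ^ 2 * φ (u * tauAux 2 h) := by
    rw [map_mul]; ring
  rw [e1, e2, e3, tauAux2_phi φ hφ, tauAux2_X_mul_phi φ hφ, tauAux2_X2_mul_phi φ hφ]
  simp

end Aux

/-- Let `k` be a field of characteristic `3`, `φ : k[[X]] → k[[X]]` the `k`-algebra
homomorphism `X ↦ X³` (characterized on coefficients), with range `k[[X³]] = φ.range`,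
and `A = k[[X]] ⊗_{k[[X³]]} k[[X]]`.  Let `V ⊆ k[[X]]` be a `k[[X³]]`-submodule (a
`k`-subspace stable under multiplication by all `φ f`) with `k[[X]]/V` one-dimensional
over `k`, and let `Im(V) ⊆ A` be the additive subgroup generated by the elements `v ⊗ f`
with `v ∈ V`, `f ∈ k[[X]]`.  Then, with `w = X⊗1 − 1⊗X`, one has
`w²·(1⊗X²) ∈ Im(V)` if and only if `X² ∈ V`. -/
theorem w_sq_mul_one_tmul_X_sq_mem_image_iff
    {k : Type*} [Field k] [CharP k 3]
    (φ : PowerSeries k →ₐ[k] PowerSeries k)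
    (hφ : ∀ (f : PowerSeries k) (n : ℕ),
      coeff n (φ f) = if 3 ∣ n then coeff (n / 3) f else 0)
    (V : Submodule k (PowerSeries k))
    (hVmod : ∀ (f : PowerSeries k), ∀ v ∈ V, φ f * v ∈ V)
    (hdim : Module.finrank k (PowerSeries k ⧸ V) = 1) :
    (((X : PowerSeries k) ⊗ₜ[φ.range] (1 : PowerSeries k) -
        (1 : PowerSeries k) ⊗ₜ[φ.range] (X : PowerSeries k)) ^ 2 *
        ((1 : PowerSeries k) ⊗ₜ[φ.range] ((X : PowerSeries k) ^ 2)) ∈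
      AddSubgroup.closure
        {a : PowerSeries k ⊗[φ.range] PowerSeries k |
          ∃ v ∈ V, ∃ f : PowerSeries k, a = v ⊗ₜ[φ.range] f}) ↔
      (X : PowerSeries k) ^ 2 ∈ V := by
  have hφX : φ X = X ^ 3 := phiXAux φ hφ
  -- the element `X^3` as an element of the base ring `φ.range`
  set r3 : φ.range := ⟨X ^ 3, ⟨X, hφX⟩⟩ with hr3
  -- rewrite the element as a sum of pure tensors with left components `X^2, -X^4, -X^4, X^3`
  have hsm := TensorProduct.smul_tmul (R := φ.range) (M := PowerSeries k)
    (N := PowerSeries k) r3 (X : PowerSeries k) (1 : PowerSeries k)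
  have hsm2 := TensorProduct.smul_tmul (R := φ.range) (M := PowerSeries k)
    (N := PowerSeries k) r3 (1 : PowerSeries k) (X : PowerSeries k)
  have h1 : ((X : PowerSeries k) ^ 3) = r3 • (1 : PowerSeries k) := by
    show _ = (X:PowerSeries k)^3 * 1; ring
  have h2 : ((X : PowerSeries k) ^ 4) = r3 • (X : PowerSeries k) := by
    show _ = (X:PowerSeries k)^3 * X; ring
  have h3 : r3 • (1 : PowerSeries k) = (X : PowerSeries k) ^ 3 := h1.symm
  have key1 : (X : PowerSeries k) ⊗ₜ[φ.range] ((X : PowerSeries k) ^ 3) =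
      ((X : PowerSeries k) ^ 4) ⊗ₜ[φ.range] (1 : PowerSeries k) := by
    rw [h1, h2]
    exact hsm.symm
  have key2 : (1 : PowerSeries k) ⊗ₜ[φ.range] ((X : PowerSeries k) ^ 4) =
      ((X : PowerSeries k) ^ 3) ⊗ₜ[φ.range] (X : PowerSeries k) := by
    rw [h1, h2]
    exact hsm2.symm
  have E_eq : ((X : PowerSeries k) ⊗ₜ[φ.range] (1 : PowerSeries k) -
        (1 : PowerSeries k) ⊗ₜ[φ.range] (X : PowerSeries k)) ^ 2 *
        ((1 : PowerSeries k) ⊗ₜ[φ.range] ((X : PowerSeries k) ^ 2)) =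
      ((X : PowerSeries k) ^ 2) ⊗ₜ[φ.range] ((X : PowerSeries k) ^ 2) +
      (-((X : PowerSeries k) ^ 4)) ⊗ₜ[φ.range] (1 : PowerSeries k) +
      (-((X : PowerSeries k) ^ 4)) ⊗ₜ[φ.range] (1 : PowerSeries k) +
      ((X : PowerSeries k) ^ 3) ⊗ₜ[φ.range] (X : PowerSeries k) := by
    have expand : ∀ a b c : PowerSeries k ⊗[φ.range] PowerSeries k,
        (a - b) ^ 2 * c = a * a * c - a * b * c - a * b * c + b * b * c := by
      intro a b c; ring
    rw [expand]
    simp only [Algebra.TensorProduct.tmul_mul_tmul, one_mul, mul_one]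
    rw [show (X : PowerSeries k) * X = X ^ 2 by ring,
      show (X : PowerSeries k) * X ^ 2 = X ^ 3 by ring,
      show (X : PowerSeries k) ^ 2 * X ^ 2 = X ^ 4 by ring]
    rw [key1, key2, neg_tmul]
    abel
  -- X^3 * f ∈ V for every f
  have hX3V : ∀ f : PowerSeries k, (X : PowerSeries k) ^ 3 * f ∈ V := by
    obtain ⟨q, hq0, hq⟩ := finrank_eq_one_iff'.mp hdim
    obtain ⟨f₀, rfl⟩ := Submodule.mkQ_surjective V q
    obtain ⟨c, hc⟩ := hq (V.mkQ (X ^ 3 * f₀))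
    have hkey : ∀ f : PowerSeries k, V.mkQ (X ^ 3 * f) = c • V.mkQ f := by
      intro f
      obtain ⟨d, hd⟩ := hq (V.mkQ f)
      have h1 : f - d • f₀ ∈ V := by
        rw [← Submodule.Quotient.mk_eq_zero V]
        have : V.mkQ (f - d • f₀) = V.mkQ f - d • V.mkQ f₀ := by
          rw [map_sub, map_smul]
        rw [show Submodule.Quotient.mk (f - d • f₀) = V.mkQ (f - d • f₀) from rfl, this,
          hd, sub_self]
      have h2 : X ^ 3 * (f - d • f₀) ∈ V := by
        rw [← hφX]; exact hVmod X _ h1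
      have h3 : V.mkQ (X ^ 3 * f) = V.mkQ (X ^ 3 * (d • f₀)) := by
        rw [← sub_eq_zero, ← map_sub, ← mul_sub]
        exact (Submodule.Quotient.mk_eq_zero V).mpr h2
      rw [h3, mul_smul_comm, map_smul, ← hc, ← hd, smul_comm]
    rcases eq_or_ne c 0 with hc0 | hc0
    · intro f
      have := hkey f
      rw [hc0, zero_smul] at this
      exact (Submodule.Quotient.mk_eq_zero V).mp this
    · exfalso
      have hu : IsUnit ((X : PowerSeries k) - C c) := by
        rw [PowerSeries.isUnit_iff_constantCoeff]
        simp only [map_sub, constantCoeff_X, constantCoeff_C, zero_sub]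
        exact (IsUnit.neg_iff _).mpr (isUnit_iff_ne_zero.mpr hc0)
      obtain ⟨w, hw⟩ := hu
      have hall : ∀ f : PowerSeries k, ((X : PowerSeries k) ^ 3 - C c) * f ∈ V := by
        intro f
        have h1 := hkey f
        rw [← map_smul, ← sub_eq_zero, ← map_sub] at h1
        have h1' : X ^ 3 * f - c • f ∈ V := (Submodule.Quotient.mk_eq_zero V).mp h1
        have heq : X ^ 3 * f - c • f = (X ^ 3 - C c) * f := by
          rw [smul_eq_C_mul]; ring
        rwa [heq] at h1'
      have hphi : φ ((X : PowerSeries k) - C c) = X ^ 3 - C c := by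
        rw [map_sub, hφX]
        congr 1
        exact φ.commutes c
      have hone : ∀ g : PowerSeries k, g ∈ V := by
        intro g
        have h2 := hall (φ (↑w⁻¹) * g)
        have h3 : ((X : PowerSeries k) ^ 3 - C c) * (φ (↑w⁻¹) * g) = g := by
          rw [← hphi, ← mul_assoc, ← map_mul, ← hw, Units.mul_inv, map_one, one_mul]
        rwa [h3] at h2
      exact hq0 ((Submodule.Quotient.mk_eq_zero V).mpr (hone f₀))
  have hX2V : (X : PowerSeries k) ^ 2 ∈ V → _ := fun h => h
  constructor
  · -- forward direction
    intro hmem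
    -- build the additive morphism Φ
    have hB2 : ∀ g : PowerSeries k, ∀ h₁ h₂ : PowerSeries k,
        V.mkQ (g * φ (tauAux 2 (h₁ + h₂))) =
          V.mkQ (g * φ (tauAux 2 h₁)) + V.mkQ (g * φ (tauAux 2 h₂)) := by
      intro g h₁ h₂
      rw [tauAux_add, map_add, mul_add, map_add]
    let B : PowerSeries k →+ PowerSeries k →+ (PowerSeries k ⧸ V) :=
      AddMonoidHom.mk' (fun g =>
        AddMonoidHom.mk' (fun h => V.mkQ (g * φ (tauAux 2 h))) (hB2 g))
        (fun g₁ g₂ => by ext h; simp [add_mul])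
    have hbal : ∀ (r : φ.range) (g h : PowerSeries k), B (r • g) h = B g (r • h) := by
      intro r g h
      obtain ⟨u, hu⟩ := r.2
      have hu2 : φ u = (r : PowerSeries k) := hu
      show V.mkQ ((r • g) * φ (tauAux 2 h)) = V.mkQ (g * φ (tauAux 2 (r • h)))
      have hsg : r • g = (r : PowerSeries k) * g := rfl
      have hsh : r • h = (r : PowerSeries k) * h := rfl
      rw [hsg, hsh, ← hu2, tauAux2_phi_mul φ hφ, map_mul φ u (tauAux 2 h)]
      congr 1
      ring
    let Φ := TensorProduct.liftAddHom B hbal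
    have hker : AddSubgroup.closure
        {a : PowerSeries k ⊗[φ.range] PowerSeries k |
          ∃ v ∈ V, ∃ f : PowerSeries k, a = v ⊗ₜ[φ.range] f} ≤ Φ.ker := by
      rw [AddSubgroup.closure_le]
      rintro a ⟨v, hv, f, rfl⟩
      show Φ (v ⊗ₜ f) = 0
      rw [show Φ (v ⊗ₜ f) = V.mkQ (v * φ (tauAux 2 f)) from rfl]
      exact (Submodule.Quotient.mk_eq_zero V).mpr (by rw [mul_comm]; exact hVmod _ _ hv)
    have hE0 : Φ (((X : PowerSeries k) ⊗ₜ[φ.range] (1 : PowerSeries k) -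
        (1 : PowerSeries k) ⊗ₜ[φ.range] (X : PowerSeries k)) ^ 2 *
        ((1 : PowerSeries k) ⊗ₜ[φ.range] ((X : PowerSeries k) ^ 2))) = 0 :=
      hker hmem
    rw [E_eq, map_add, map_add, map_add] at hE0
    have v1 : Φ (((X : PowerSeries k) ^ 2) ⊗ₜ[φ.range] ((X : PowerSeries k) ^ 2)) =
        V.mkQ (X ^ 2) := by
      show V.mkQ (X ^ 2 * φ (tauAux 2 (X ^ 2))) = _
      rw [tauAux2_X_sq, map_one, mul_one]
    have v2 : Φ ((-((X : PowerSeries k) ^ 4)) ⊗ₜ[φ.range] (1 : PowerSeries k)) = 0 := by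
      show V.mkQ (-(X ^ 4) * φ (tauAux 2 1)) = _
      rw [tauAux2_one, map_zero, mul_zero, map_zero]
    have v3 : Φ (((X : PowerSeries k) ^ 3) ⊗ₜ[φ.range] (X : PowerSeries k)) = 0 := by
      show V.mkQ (X ^ 3 * φ (tauAux 2 X)) = _
      rw [tauAux2_X, map_zero, mul_zero, map_zero]
    rw [v1, v2, v3, add_zero, add_zero, add_zero] at hE0
    exact (Submodule.Quotient.mk_eq_zero V).mp hE0
  · -- reverse direction
    intro hX2
    rw [E_eq]
    have m1 : ((X : PowerSeries k) ^ 2) ⊗ₜ[φ.range] ((X : PowerSeries k) ^ 2) ∈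
        AddSubgroup.closure {a : PowerSeries k ⊗[φ.range] PowerSeries k |
          ∃ v ∈ V, ∃ f : PowerSeries k, a = v ⊗ₜ[φ.range] f} :=
      AddSubgroup.subset_closure ⟨X ^ 2, hX2, X ^ 2, rfl⟩
    have hX4 : -((X : PowerSeries k) ^ 4) ∈ V := by
      have : (X : PowerSeries k) ^ 4 = X ^ 3 * X := by ring
      rw [this]
      exact neg_mem (hX3V X)
    have m2 : (-((X : PowerSeries k) ^ 4)) ⊗ₜ[φ.range] (1 : PowerSeries k) ∈
        AddSubgroup.closure {a : PowerSeries k ⊗[φ.range] PowerSeries k |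
          ∃ v ∈ V, ∃ f : PowerSeries k, a = v ⊗ₜ[φ.range] f} :=
      AddSubgroup.subset_closure ⟨-(X ^ 4), hX4, 1, rfl⟩
    have hX3 : (X : PowerSeries k) ^ 3 ∈ V := by
      have := hX3V 1
      rwa [mul_one] at this
    have m3 : ((X : PowerSeries k) ^ 3) ⊗ₜ[φ.range] (X : PowerSeries k) ∈
        AddSubgroup.closure {a : PowerSeries k ⊗[φ.range] PowerSeries k |
          ∃ v ∈ V, ∃ f : PowerSeries k, a = v ⊗ₜ[φ.range] f} :=
      AddSubgroup.subset_closure ⟨X ^ 3, hX3, X, rfl⟩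
    exact add_mem (add_mem (add_mem m1 m2) m2) m3
end

section
/- Let V ⊆ k[[X]] be a k[[X³]]-submodule whose quotient k[[X]]/V is one-dimensional over k. Then w²·(1⊗X³) belongs to Im(V), the image of V ⊗_{k[[X³]]} k[[X]] in A = k[[X]] ⊗_{k[[X³]]} k[[X]]. -/
open PowerSeries TensorProduct

set_option maxHeartbeats 1000000
set_option synthInstance.maxHeartbeats 400000

private lemma expand_aux_wsq {R : Type*} [CommRing R] (a b c : R) :
    (a - b)^2 * c = (a*a*c - a*b*c) - (b*a*c - b*b*c) := by ring

/-- Let `k` be a field of characteristic `3`, `φ : k[[X]] → k[[X]]` the `k`-algebra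
homomorphism `X ↦ X³` (characterized on coefficients), with range `k[[X³]] = φ.range`,
and `A = k[[X]] ⊗_{k[[X³]]} k[[X]]`.  Let `V ⊆ k[[X]]` be a `k[[X³]]`-submodule (a
`k`-subspace stable under multiplication by all `φ f`) with `k[[X]]/V` one-dimensional
over `k`, and let `Im(V) ⊆ A` be the additive subgroup generated by the elements `v ⊗ f`
with `v ∈ V`, `f ∈ k[[X]]`.  Then, with `w = X⊗1 − 1⊗X`, one has
`w²·(1⊗X³) ∈ Im(V)`. -/
theorem w_sq_mul_one_tmul_X_cubed_mem_image
    {k : Type*} [Field k] [CharP k 3]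
    (φ : PowerSeries k →ₐ[k] PowerSeries k)
    (hφ : ∀ (f : PowerSeries k) (n : ℕ),
      coeff n (φ f) = if 3 ∣ n then coeff (n / 3) f else 0)
    (V : Submodule k (PowerSeries k))
    (hVmod : ∀ (f : PowerSeries k), ∀ v ∈ V, φ f * v ∈ V)
    (hdim : Module.finrank k (PowerSeries k ⧸ V) = 1) :
    ((X : PowerSeries k) ⊗ₜ[φ.range] (1 : PowerSeries k) -
        (1 : PowerSeries k) ⊗ₜ[φ.range] (X : PowerSeries k)) ^ 2 *
        ((1 : PowerSeries k) ⊗ₜ[φ.range] ((X : PowerSeries k) ^ 3)) ∈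
      AddSubgroup.closure
        {a : PowerSeries k ⊗[φ.range] PowerSeries k |
          ∃ v ∈ V, ∃ f : PowerSeries k, a = v ⊗ₜ[φ.range] f} := by
  -- `φ X = X ^ 3`
  have hφX : φ X = X ^ 3 := by
    ext n
    rw [hφ, coeff_X_pow]
    rcases Nat.lt_trichotomy n 3 with h | h | h
    · interval_cases n <;> simp [coeff_X]
    · subst h; simp [coeff_X]
    · have h3 : ¬ (n = 3) := by omega
      rw [if_neg h3]
      split_ifs with hd
      · rw [coeff_X, if_neg (by omega)]
      · rfl
  -- key lemma : `X^3 * g ∈ V` for all `g`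
  have key : ∀ g : PowerSeries k, X ^ 3 * g ∈ V := by
    have hle : V ≤ V.comap (LinearMap.mulLeft k (X ^ 3 : PowerSeries k)) := by
      intro v hv
      simpa [LinearMap.mulLeft, hφX] using hVmod X v hv
    set T := V.mapQ V (LinearMap.mulLeft k (X ^ 3 : PowerSeries k)) hle with hT
    obtain ⟨v0, hv0, hspan⟩ := finrank_eq_one_iff'.mp hdim
    obtain ⟨c, hc⟩ : ∃ c : k, T v0 = c • v0 := by
      obtain ⟨c, hc⟩ := hspan (T v0); exact ⟨c, hc.symm⟩
    have hTq : ∀ q, T q = c • q := by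
      intro q
      obtain ⟨a, rfl⟩ := hspan q
      rw [map_smul, hc, smul_comm]
    by_cases hc0 : c = 0
    · intro g
      have := hTq (Submodule.Quotient.mk g)
      rw [hc0, zero_smul] at this
      have : Submodule.Quotient.mk (X ^ 3 * g) = (0 : PowerSeries k ⧸ V) := this
      exact (Submodule.Quotient.mk_eq_zero V).mp this
    · exfalso
      -- `X^3 - C c` is a unit
      have hu : IsUnit ((X : PowerSeries k) ^ 3 - C c) := by
        rw [PowerSeries.isUnit_iff_constantCoeff]
        simp [hc0]
      obtain ⟨u, hu⟩ := hu
      have hall : ∀ h : PowerSeries k, h ∈ V := by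
        intro h
        have e : (X : PowerSeries k) ^ 3 * (↑u⁻¹ * h) - c • (↑u⁻¹ * h) = h := by
          have : ((X : PowerSeries k) ^ 3 - C c) * (↑u⁻¹ * h) = h := by
            rw [← hu, Units.mul_inv_cancel_left]
          calc (X : PowerSeries k) ^ 3 * (↑u⁻¹ * h) - c • (↑u⁻¹ * h)
              = ((X : PowerSeries k) ^ 3 - C c) * (↑u⁻¹ * h) := by
                rw [sub_mul]; congr 1; rw [PowerSeries.smul_eq_C_mul]
            _ = h := this
        have hmk : Submodule.Quotient.mk ((X : PowerSeries k) ^ 3 * (↑u⁻¹ * h) -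
            c • ((↑u⁻¹ : PowerSeries k) * h)) = (0 : PowerSeries k ⧸ V) := by
          rw [Submodule.Quotient.mk_sub]
          have h1 : (Submodule.Quotient.mk ((X : PowerSeries k) ^ 3 * (↑u⁻¹ * h)) :
              PowerSeries k ⧸ V) = T (Submodule.Quotient.mk (↑u⁻¹ * h)) := by
            simp [hT, Submodule.mapQ_apply, LinearMap.mulLeft_apply]
          rw [h1, hTq, Submodule.Quotient.mk_smul, sub_self]
        rw [e] at hmk
        exact (Submodule.Quotient.mk_eq_zero V).mp hmk
      have : Subsingleton (PowerSeries k ⧸ V) := by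
        constructor
        intro a b
        obtain ⟨a, rfl⟩ := Submodule.Quotient.mk_surjective V a
        obtain ⟨b, rfl⟩ := Submodule.Quotient.mk_surjective V b
        rw [Submodule.Quotient.eq]; exact hall _
      rw [Module.finrank_zero_of_subsingleton] at hdim
      exact one_ne_zero hdim.symm
  -- the scalar `X^3` moves across the tensor product
  have hr : ∀ (m n : PowerSeries k),
      ((X : PowerSeries k)^3 * m) ⊗ₜ[φ.range] n = m ⊗ₜ[φ.range] ((X : PowerSeries k)^3 * n) := by
    intro m n
    have h1 := TensorProduct.smul_tmul' (R := φ.range) (⟨X^3, ⟨X, hφX⟩⟩ : φ.range) m n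
    have h2 := TensorProduct.tmul_smul (R := φ.range) (⟨X^3, ⟨X, hφX⟩⟩ : φ.range) m n
    have := h1.symm.trans h2.symm
    simpa [Subalgebra.smul_def, smul_eq_mul] using this
  -- the main computation
  have hmain :
      ((X : PowerSeries k) ⊗ₜ[φ.range] (1 : PowerSeries k) -
          (1 : PowerSeries k) ⊗ₜ[φ.range] (X : PowerSeries k)) ^ 2 *
          ((1 : PowerSeries k) ⊗ₜ[φ.range] ((X : PowerSeries k) ^ 3)) =
        (X^5 : PowerSeries k) ⊗ₜ[φ.range] 1 + (X^4 : PowerSeries k) ⊗ₜ[φ.range] X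
          + (X^3 : PowerSeries k) ⊗ₜ[φ.range] ((X : PowerSeries k)^2) := by
    refine (expand_aux_wsq ((X : PowerSeries k) ⊗ₜ[φ.range] (1 : PowerSeries k))
      ((1 : PowerSeries k) ⊗ₜ[φ.range] (X : PowerSeries k))
      ((1 : PowerSeries k) ⊗ₜ[φ.range] ((X : PowerSeries k) ^ 3))).trans ?_
    simp only [Algebra.TensorProduct.tmul_mul_tmul, one_mul, mul_one]
    have c1 : (X*X : PowerSeries k) ⊗ₜ[φ.range] ((X:PowerSeries k)^3)
        = (X^5 : PowerSeries k) ⊗ₜ[φ.range] (1 : PowerSeries k) := by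
      calc (X*X : PowerSeries k) ⊗ₜ[φ.range] ((X:PowerSeries k)^3)
          = (X*X : PowerSeries k) ⊗ₜ[φ.range] ((X:PowerSeries k)^3 * 1) := by rw [mul_one]
        _ = ((X:PowerSeries k)^3 * (X*X)) ⊗ₜ[φ.range] (1:PowerSeries k) := (hr _ _).symm
        _ = (X^5 : PowerSeries k) ⊗ₜ[φ.range] (1:PowerSeries k) := by
            rw [show ((X:PowerSeries k)^3 * (X*X)) = X^5 by ring]
    have c2 : (X : PowerSeries k) ⊗ₜ[φ.range] ((X:PowerSeries k) * (X:PowerSeries k)^3)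
        = (X^4 : PowerSeries k) ⊗ₜ[φ.range] (X : PowerSeries k) := by
      calc (X : PowerSeries k) ⊗ₜ[φ.range] ((X:PowerSeries k) * (X:PowerSeries k)^3)
          = (X : PowerSeries k) ⊗ₜ[φ.range] ((X:PowerSeries k)^3 * X) := by rw [mul_comm]
        _ = ((X:PowerSeries k)^3 * X) ⊗ₜ[φ.range] (X : PowerSeries k) := (hr _ _).symm
        _ = (X^4 : PowerSeries k) ⊗ₜ[φ.range] (X : PowerSeries k) := by
            rw [show ((X:PowerSeries k)^3 * X) = X^4 by ring]
    have c3 : (1 : PowerSeries k) ⊗ₜ[φ.range] ((X:PowerSeries k) * X * (X:PowerSeries k)^3)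
        = (X^3 : PowerSeries k) ⊗ₜ[φ.range] ((X:PowerSeries k)^2) := by
      calc (1 : PowerSeries k) ⊗ₜ[φ.range] ((X:PowerSeries k) * X * (X:PowerSeries k)^3)
          = (1 : PowerSeries k) ⊗ₜ[φ.range] ((X:PowerSeries k)^3 * X^2) := by
            rw [show ((X:PowerSeries k) * X * (X:PowerSeries k)^3)
              = (X:PowerSeries k)^3 * X^2 by ring]
        _ = ((X:PowerSeries k)^3 * 1) ⊗ₜ[φ.range] ((X:PowerSeries k)^2) := (hr _ _).symm
        _ = (X^3 : PowerSeries k) ⊗ₜ[φ.range] ((X:PowerSeries k)^2) := by rw [mul_one]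
    rw [c1, c2, c3]
    have h0 : ((X^4 : PowerSeries k) ⊗ₜ[φ.range] (X : PowerSeries k))
        + (X^4 : PowerSeries k) ⊗ₜ[φ.range] (X : PowerSeries k)
        + (X^4 : PowerSeries k) ⊗ₜ[φ.range] (X : PowerSeries k) = 0 := by
      rw [← TensorProduct.add_tmul, ← TensorProduct.add_tmul]
      have h4 : (X^4 : PowerSeries k) + X^4 + X^4 = 0 := by
        have h3 : (3 : k) = 0 := by
          have := CharP.cast_eq_zero k 3
          simpa using this
        have hs : ((3:k)) • (X^4 : PowerSeries k) = X^4 + X^4 + X^4 := by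
          rw [show (3:k) = 1+1+1 by ring, add_smul, add_smul, one_smul]
        rw [← hs, h3, zero_smul]
      rw [h4, TensorProduct.zero_tmul]
    have habel : ∀ (u v w : PowerSeries k ⊗[φ.range] PowerSeries k),
        u - v - (v - w) = u + v + w - (v + v + v) := by intro u v w; abel
    rw [habel, h0]
    exact sub_zero _
  rw [hmain]
  have m5 : (X^5 : PowerSeries k) ∈ V := by
    rw [show (X^5 : PowerSeries k) = X^3 * X^2 by ring]; exact key _
  have m4 : (X^4 : PowerSeries k) ∈ V := by
    rw [show (X^4 : PowerSeries k) = X^3 * X by ring]; exact key _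
  have m3 : (X^3 : PowerSeries k) ∈ V := by
    rw [show (X^3 : PowerSeries k) = X^3 * 1 by ring]; exact key _
  refine AddSubgroup.add_mem _ (AddSubgroup.add_mem _ ?_ ?_) ?_
  · exact AddSubgroup.subset_closure ⟨X^5, m5, 1, rfl⟩
  · exact AddSubgroup.subset_closure ⟨X^4, m4, X, rfl⟩
  · exact AddSubgroup.subset_closure ⟨X^3, m3, X^2, rfl⟩
end
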